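/- arXiv:math/0309052 — 4 statements merged into one kernel-verified Lean document; each statement's English description precedes it below -/
import Mathlib

section
/- Let (G,E,ν) be a weighted graph with controlled weights which satisfies the elliptic Harnack inequality with constant C₁. Then there exist constants C and θ, depending only on C₁ and the controlled-weights constant p₀, such that |B(x₀,R)| ≤ C·R^{1+θ} for all x₀ ∈ G and all R ≥ 1. -/
structure WeightedGraph (V : Type) where
  Adj : V → V → Prop
  symm : ∀ {x y}, Adj x y → Adj y x
  irrefl : ∀ x, ¬ Adj x x
  nbhd : V → Finset V
  mem_nbhd : ∀ x y, y ∈ nbhd x ↔ Adj x y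
  conn : ∀ x y, Relation.ReflTransGen Adj x y
  ν : V → V → ℝ
  ν_symm : ∀ x y, ν x y = ν y x
  ν_nonneg : ∀ x y, 0 ≤ ν x y
  ν_pos_iff : ∀ x y, 0 < ν x y ↔ Adj x y

namespace WeightedGraph

variable {V : Type} (W : WeightedGraph V)

/-- The underlying simple graph. -/
def G : SimpleGraph V where
  Adj := W.Adj
  symm := ⟨fun _ _ h => W.symm h⟩
  loopless := ⟨fun x h => W.irrefl x h⟩

/-- Graph distance. -/
noncomputable def dist (x y : V) : ℕ := W.G.dist x y

/-- Closed ball of integer radius. -/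
noncomputable def ball (x : V) (R : ℕ) : Set V := {y | W.dist x y ≤ R}

/-- Closed ball of real radius. -/
noncomputable def rball (x : V) (ρ : ℝ) : Set V := {y | (W.dist x y : ℝ) ≤ ρ}

/-- Total weight at a vertex. -/
def mu (x : V) : ℝ := ∑ y ∈ W.nbhd x, W.ν x y

/-- The (unnormalized) Laplacian, `μ(x)·Δf(x)`. -/
def lap (h : V → ℝ) (x : V) : ℝ := ∑ y ∈ W.nbhd x, W.ν x y * (h y - h x)

/-- `h` is harmonic on `A`. -/
def HarmOn (h : V → ℝ) (A : Set V) : Prop := ∀ x ∈ A, W.lap h x = 0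

/-- Exterior boundary of a set. -/
def bdry (A : Set V) : Set V := {y | y ∉ A ∧ ∃ x ∈ A, W.Adj x y}

/-- Closure `A ∪ ∂A`. -/
def cl (A : Set V) : Set V := A ∪ W.bdry A

/-- Controlled weights with constant `p₀`. -/
def ControlledWeights (p₀ : ℝ) : Prop :=
  0 < p₀ ∧ ∀ x y, W.Adj x y → p₀ * W.mu x ≤ W.ν x y

/-- The elliptic Harnack inequality with constant `C₁`. -/
def EHI (C₁ : ℝ) : Prop :=
  ∀ x : V, ∀ R : ℕ, 1 ≤ R → ∀ h : V → ℝ, (∀ v, 0 ≤ h v) →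
    W.HarmOn h (W.ball x (2 * R)) →
    ∀ y ∈ W.ball x R, ∀ z ∈ W.ball x R, h y ≤ C₁ * h z

/-- `g` is the Green's function of the walk killed outside `D`, with pole `x₀`:
it is nonnegative, vanishes outside `D`, is harmonic on `D ∖ {x₀}` and
satisfies `μ(x₀)·Δg(x₀) = -1`. -/
def IsGreen (D : Set V) (x₀ : V) (g : V → ℝ) : Prop :=
  (∀ v, 0 ≤ g v) ∧ (∀ y, y ∉ D → g y = 0) ∧
  (∀ x ∈ D, x ≠ x₀ → W.lap g x = 0) ∧ W.lap g x₀ = -1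

end WeightedGraph

namespace WeightedGraph

variable {V : Type} (W : WeightedGraph V)

lemma nu_pos_of_adj {x y : V} (h : W.Adj x y) : 0 < W.ν x y := (W.ν_pos_iff x y).2 h

lemma mem_nbhd_of_adj {x y : V} (h : W.Adj x y) : y ∈ W.nbhd x := (W.mem_nbhd x y).2 h

lemma adj_of_mem_nbhd {x y : V} (h : y ∈ W.nbhd x) : W.Adj x y := (W.mem_nbhd x y).1 h

lemma nu_le_mu {x y : V} (h : W.Adj x y) : W.ν x y ≤ W.mu x :=
  Finset.single_le_sum (fun z _ => W.ν_nonneg x z) (W.mem_nbhd_of_adj h)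

lemma mu_pos_of_adj {x y : V} (h : W.Adj x y) : 0 < W.mu x :=
  lt_of_lt_of_le (W.nu_pos_of_adj h) (W.nu_le_mu h)

lemma mu_nonneg (x : V) : 0 ≤ W.mu x :=
  Finset.sum_nonneg fun z _ => W.ν_nonneg x z

lemma reachable (x y : V) : W.G.Reachable x y :=
  (SimpleGraph.reachable_iff_reflTransGen x y).2 (W.conn x y)

lemma connected (x : V) : W.G.Connected :=
  (SimpleGraph.connected_iff_exists_forall_reachable W.G).2 ⟨x, fun w => W.reachable x w⟩

lemma dist_self' (x : V) : W.dist x x = 0 := SimpleGraph.dist_self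

lemma dist_triangle {x y z : V} : W.dist x z ≤ W.dist x y + W.dist y z :=
  (W.connected x).dist_triangle

lemma dist_comm' (x y : V) : W.dist x y = W.dist y x := SimpleGraph.dist_comm

lemma dist_eq_zero_iff {x y : V} : W.dist x y = 0 ↔ x = y :=
  (W.connected x).dist_eq_zero_iff

lemma dist_adj {x y : V} (h : W.Adj x y) : W.dist x y ≤ 1 := by
  have : W.G.Adj x y := h
  exact le_of_eq (SimpleGraph.dist_eq_one_iff_adj.2 this)

private lemma dist_getVert_le {x y : V} (p : W.G.Walk x y) :
    ∀ k : ℕ, W.dist x (p.getVert k) ≤ k := by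
  induction p with
  | nil => intro k; simp [SimpleGraph.Walk.getVert, dist_self']
  | @cons u v w h q ih =>
    intro k
    cases k with
    | zero => simp [SimpleGraph.Walk.getVert_zero, dist_self']
    | succ n =>
      rw [SimpleGraph.Walk.getVert_cons_succ]
      calc W.dist u (q.getVert n) ≤ W.dist u v + W.dist v (q.getVert n) := W.dist_triangle
        _ ≤ 1 + n := Nat.add_le_add (W.dist_adj h) (ih n)
        _ = n + 1 := Nat.add_comm 1 n

/-- parent: a vertex one step closer on a geodesic. -/
lemma exists_parent {x y : V} {k : ℕ} (h : W.dist x y = k + 1) :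
    ∃ u : V, W.dist x u = k ∧ W.Adj u y := by
  obtain ⟨p, hp⟩ := (W.connected x).exists_walk_length_eq_dist x y
  have hp' : p.length = k + 1 := by rw [hp]; exact h
  have hk : k < p.length := by omega
  have hadj : W.G.Adj (p.getVert k) (p.getVert (k+1)) := p.adj_getVert_succ hk
  have hy : p.getVert (k+1) = y := by
    have h0 : p.getVert p.length = y := p.getVert_length
    rw [hp'] at h0; exact h0
  rw [hy] at hadj
  refine ⟨p.getVert k, le_antisymm (W.dist_getVert_le p k) ?_, hadj⟩
  have h1 : W.dist x y ≤ W.dist x (p.getVert k) + W.dist (p.getVert k) y := W.dist_triangle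
  have h2 : W.dist (p.getVert k) y ≤ 1 := W.dist_adj hadj
  omega

/-- A geodesic chain from x to y. -/
lemma exists_chain {x : V} : ∀ {r : ℕ} {y : V}, W.dist x y = r →
    ∃ z : ℕ → V, z r = y ∧ (∀ k, k < r → W.Adj (z k) (z (k+1))) ∧ (∀ k, k ≤ r → W.dist x (z k) = k) := by
  intro r
  induction r with
  | zero =>
    intro y h
    have : x = y := W.dist_eq_zero_iff.1 h
    exact ⟨fun _ => y, rfl, fun k hk => absurd hk (Nat.not_lt_zero k),
      fun k hk => by simp [Nat.le_zero.1 hk, ← this, dist_self']⟩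
  | succ n ih =>
    intro y h
    obtain ⟨u, hu, hadj⟩ := W.exists_parent h
    obtain ⟨z, hz1, hz2, hz3⟩ := ih hu
    refine ⟨fun k => if k = n + 1 then y else z k, by simp, ?_, ?_⟩
    · intro k hk
      by_cases hkn : k = n
      · simp only [if_neg (show k ≠ n + 1 by omega), if_pos (show k + 1 = n + 1 by omega)]
        rw [hkn, hz1]; exact hadj
      · have hk1 : k < n := by omega
        simp only [if_neg (by omega : k ≠ n + 1), if_neg (by omega : k + 1 ≠ n + 1)]
        exact hz2 k hk1
    · intro k hk
      by_cases hkn : k = n + 1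
      · subst hkn; simpa using h
      · simp only [if_neg hkn]
        exact hz3 k (by omega)

lemma chain_dist_le {r : ℕ} {z : ℕ → V} (hadj : ∀ k, k < r → W.Adj (z k) (z (k+1))) :
    ∀ a b, a ≤ b → b ≤ r → W.dist (z a) (z b) ≤ b - a := by
  intro a b
  induction b with
  | zero => intro h1 _; have := Nat.le_zero.1 h1; subst this; simp [dist_self']
  | succ n ih =>
    intro h1 h2
    by_cases hab : a = n + 1
    · subst hab; simp [dist_self']
    · have ha : a ≤ n := by omega
      calc W.dist (z a) (z (n+1)) ≤ W.dist (z a) (z n) + W.dist (z n) (z (n+1)) := W.dist_triangle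
        _ ≤ (n - a) + 1 := Nat.add_le_add (ih ha (by omega)) (W.dist_adj (hadj n (by omega)))
        _ ≤ n + 1 - a := by omega

end WeightedGraph
namespace WeightedGraph

variable {V : Type} (W : WeightedGraph V)

/-- Sphere of radius r. -/
def sphere (x : V) (r : ℕ) : Set V := {y | W.dist x y = r}

lemma lap_const (c : ℝ) (x : V) : W.lap (fun _ => c) x = 0 := by
  simp [lap]

lemma lap_sub (f g : V → ℝ) (x : V) :
    W.lap (fun v => f v - g v) x = W.lap f x - W.lap g x := by
  simp only [lap, ← Finset.sum_sub_distrib]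
  congr 1; ext y; ring

lemma lap_finset_sum {ι : Type} (s : Finset ι) (f : ι → V → ℝ) (x : V) :
    W.lap (fun v => ∑ i ∈ s, f i v) x = ∑ i ∈ s, W.lap (f i) x := by
  unfold lap
  conv_rhs => rw [Finset.sum_comm]
  refine Finset.sum_congr rfl (fun y _ => ?_)
  rw [← Finset.sum_sub_distrib, ← Finset.mul_sum]

lemma harmOn_mono {h : V → ℝ} {A B : Set V} (hAB : A ⊆ B) (hh : W.HarmOn h B) :
    W.HarmOn h A := fun x hx => hh x (hAB hx)

lemma mem_ball_self (x : V) (R : ℕ) : x ∈ W.ball x R := by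
  simp [ball, dist_self']

lemma ball_zero (x : V) : W.ball x 0 = {x} := by
  ext y; simp only [ball, Set.mem_setOf_eq, Nat.le_zero, Set.mem_singleton_iff]
  rw [W.dist_eq_zero_iff]; exact eq_comm

lemma ball_succ (x : V) (R : ℕ) : W.ball x (R+1) = W.ball x R ∪ W.sphere x (R+1) := by
  ext y; simp only [ball, sphere, Set.mem_setOf_eq, Set.mem_union]
  omega

lemma ball_finite (x : V) (R : ℕ) : (W.ball x R).Finite := by
  induction R with
  | zero => rw [ball_zero]; exact Set.finite_singleton x
  | succ n ih =>
    have hsub : W.ball x (n+1) ⊆ W.ball x n ∪ ⋃ u ∈ W.ball x n, (W.nbhd u : Set V) := by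
      intro y hy
      have hy' : W.dist x y ≤ n + 1 := hy
      by_cases hn : W.dist x y ≤ n
      · exact Set.mem_union_left _ hn
      · have : W.dist x y = n + 1 := by omega
        obtain ⟨u, hu, hadj⟩ := W.exists_parent this
        refine Set.mem_union_right _ ?_
        refine Set.mem_biUnion (show u ∈ W.ball x n from le_of_eq hu) ?_
        exact W.mem_nbhd_of_adj hadj
    exact Set.Finite.subset (ih.union (ih.biUnion (fun u _ => (W.nbhd u).finite_toSet))) hsub

lemma sphere_subset_ball (x : V) (r : ℕ) : W.sphere x r ⊆ W.ball x r :=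
  fun y hy => le_of_eq hy

lemma sphere_finite (x : V) (r : ℕ) : (W.sphere x r).Finite :=
  (W.ball_finite x r).subset (W.sphere_subset_ball x r)

lemma bdry_ball_eq_sphere (x : V) (ρ : ℕ) :
    W.bdry (W.ball x ρ) = W.sphere x (ρ+1) := by
  ext b
  constructor
  · rintro ⟨hb, u, hu, hadj⟩
    have h1 : ¬ (W.dist x b ≤ ρ) := hb
    have h2 : W.dist x b ≤ W.dist x u + W.dist u b := W.dist_triangle
    have h3 : W.dist u b ≤ 1 := W.dist_adj hadj
    have h4 : W.dist x u ≤ ρ := hu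
    show W.dist x b = ρ + 1
    omega
  · intro hb
    have hb' : W.dist x b = ρ + 1 := hb
    obtain ⟨u, hu, hadj⟩ := W.exists_parent hb'
    exact ⟨by simp only [ball, Set.mem_setOf_eq]; omega, u, le_of_eq hu, hadj⟩

/-- Nonnegativity propagation not needed; basic membership -/
lemma ball_subset_ball (x : V) {R R' : ℕ} (h : R ≤ R') : W.ball x R ⊆ W.ball x R' :=
  fun y hy => le_trans hy h

end WeightedGraph
namespace WeightedGraph

variable {V : Type} (W : WeightedGraph V)

lemma ne_of_mem_nbhd {x y : V} (h : y ∈ W.nbhd x) : y ≠ x := by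
  intro he; subst he; exact W.irrefl y (W.adj_of_mem_nbhd h)

lemma bdry_finite {D : Set V} (hD : D.Finite) : (W.bdry D).Finite := by
  have hsub : W.bdry D ⊆ ⋃ x ∈ D, (W.nbhd x : Set V) := by
    rintro b ⟨_, u, hu, hadj⟩
    exact Set.mem_biUnion hu (W.mem_nbhd_of_adj hadj)
  exact Set.Finite.subset (hD.biUnion (fun u _ => (W.nbhd u).finite_toSet)) hsub

/-- Solution of the Dirichlet problem on a finite set. -/
theorem exists_harmonic_extension (D : Set V) (hD : D.Finite) (f : V → ℝ) :
    ∃ H : V → ℝ, (∀ v, v ∉ D → H v = f v) ∧ W.HarmOn H D := by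
  classical
  set Dfin : Finset V := hD.toFinset with hDfin
  have hbd : (W.bdry D).Finite := W.bdry_finite hD
  set Bfin : Finset V := hbd.toFinset with hBfin
  set Tfin : Finset V := Dfin ∪ Bfin with hTfin
  set M : ℝ := 1 + ∑ b ∈ Bfin, |f b| with hM
  have hM1 : (1:ℝ) ≤ M := by
    have : (0:ℝ) ≤ ∑ b ∈ Bfin, |f b| := Finset.sum_nonneg (fun b _ => abs_nonneg _)
    simp only [hM]; linarith
  have hMf : ∀ b ∈ W.bdry D, |f b| ≤ M := by
    intro b hb
    have hbmem : b ∈ Bfin := hbd.mem_toFinset.2 hb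
    have h1 : |f b| ≤ ∑ b ∈ Bfin, |f b| :=
      Finset.single_le_sum (fun c _ => abs_nonneg (f c)) hbmem
    simp only [hM]; linarith
  -- the parameter space
  set P := ({ v // v ∈ Dfin } → ℝ) with hP
  set uval : P → V → ℝ := fun p v => if h : v ∈ Dfin then p ⟨v, h⟩ else f v with huval
  set E : P → ℝ :=
    fun p => ∑ x ∈ Tfin, ∑ y ∈ W.nbhd x, W.ν x y * (uval p x - uval p y)^2 with hE
  have hcont : Continuous E := by
    apply continuous_finset_sum
    intro x _
    apply continuous_finset_sum
    intro y _
    have hv : ∀ z : V, Continuous (fun p : P => uval p z) := by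
      intro z
      by_cases hz : z ∈ Dfin
      · simpa only [huval, dif_pos hz] using continuous_apply (⟨z, hz⟩ : { v // v ∈ Dfin })
      · simpa only [huval, dif_neg hz] using (continuous_const : Continuous fun _ : P => f z)
    exact continuous_const.mul (((hv x).sub (hv y)).pow 2)
  set K : Set P := Set.pi Set.univ (fun _ => Set.Icc (-M) M) with hK
  have hKcomp : IsCompact K := isCompact_univ_pi (fun _ => isCompact_Icc)
  have hKne : K.Nonempty := by
    refine ⟨fun _ => 0, fun i _ => ?_⟩
    have h0 : (0:ℝ) ∈ Set.Icc (-M) M := ⟨by linarith, by linarith⟩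
    exact h0
  obtain ⟨p, hpK, hpmin⟩ := hKcomp.exists_isMinOn hKne hcont.continuousOn
  set H : V → ℝ := uval p with hH
  have hoffD : ∀ v, v ∉ D → H v = f v := by
    intro v hv
    have : v ∉ Dfin := by simpa [hDfin, hD.mem_toFinset] using hv
    simp [hH, huval, dif_neg this]
  refine ⟨H, hoffD, ?_⟩
  intro x hxD
  have hxDfin : x ∈ Dfin := hD.mem_toFinset.2 hxD
  rcases Finset.eq_empty_or_nonempty (W.nbhd x) with hemp | hne
  · simp [lap, hemp]
  -- x has a neighbour
  have hmux : 0 < W.mu x := by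
    obtain ⟨y, hy⟩ := hne
    exact W.mu_pos_of_adj (W.adj_of_mem_nbhd hy)
  -- all neighbours of x lie in Tfin and have values bounded by M
  have hnbhdT : ∀ y ∈ W.nbhd x, y ∈ Tfin := by
    intro y hy
    by_cases hyD : y ∈ D
    · exact Finset.mem_union_left _ (hD.mem_toFinset.2 hyD)
    · refine Finset.mem_union_right _ (hbd.mem_toFinset.2 ⟨hyD, x, hxD, W.adj_of_mem_nbhd hy⟩)
  have hHbound : ∀ y ∈ W.nbhd x, |H y| ≤ M := by
    intro y hy
    by_cases hyD : y ∈ Dfin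
    · have := hpK (⟨y, hyD⟩ : { v // v ∈ Dfin }) (Set.mem_univ _)
      have h2 : p ⟨y, hyD⟩ ∈ Set.Icc (-M) M := this
      have : H y = p ⟨y, hyD⟩ := by simp [hH, huval, dif_pos hyD]
      rw [this, abs_le]; exact ⟨h2.1, h2.2⟩
    · have hyD' : y ∉ D := fun hc => hyD (hD.mem_toFinset.2 hc)
      have hb : y ∈ W.bdry D := ⟨hyD', x, hxD, W.adj_of_mem_nbhd hy⟩
      have : H y = f y := hoffD y hyD'
      rw [this]; exact hMf y hb
  set tbar : ℝ := (∑ y ∈ W.nbhd x, W.ν x y * H y) / W.mu x with htbar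
  have hsum_eq : ∑ y ∈ W.nbhd x, W.ν x y * H y = W.mu x * tbar := by
    rw [htbar, mul_div_cancel₀]
    exact ne_of_gt hmux
  have htbarbox : tbar ∈ Set.Icc (-M) M := by
    have habs : |∑ y ∈ W.nbhd x, W.ν x y * H y| ≤ W.mu x * M := by
      calc |∑ y ∈ W.nbhd x, W.ν x y * H y| ≤ ∑ y ∈ W.nbhd x, |W.ν x y * H y| :=
            Finset.abs_sum_le_sum_abs _ _
        _ ≤ ∑ y ∈ W.nbhd x, W.ν x y * M := by
            refine Finset.sum_le_sum (fun y hy => ?_)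
            rw [abs_mul, abs_of_nonneg (W.ν_nonneg x y)]
            exact mul_le_mul_of_nonneg_left (hHbound y hy) (W.ν_nonneg x y)
        _ = W.mu x * M := by rw [← Finset.sum_mul, mu]
    have : |tbar| ≤ M := by
      rw [htbar, abs_div, abs_of_pos hmux, div_le_iff₀ hmux]
      calc |∑ y ∈ W.nbhd x, W.ν x y * H y| ≤ W.mu x * M := habs
        _ = M * W.mu x := mul_comm _ _
    rw [Set.mem_Icc, ← abs_le]; exact this
  -- update function
  set i : { v // v ∈ Dfin } := ⟨x, hxDfin⟩ with hi
  have huval_upd_self : ∀ t : ℝ, uval (Function.update p i t) x = t := by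
    intro t
    simp only [huval, dif_pos hxDfin]
    have : (⟨x, hxDfin⟩ : { v // v ∈ Dfin }) = i := rfl
    rw [this, Function.update_self]
  have huval_upd_ne : ∀ (t : ℝ) (v : V), v ≠ x → uval (Function.update p i t) v = uval p v := by
    intro t v hv
    simp only [huval]
    by_cases hvD : v ∈ Dfin
    · rw [dif_pos hvD, dif_pos hvD]
      have : (⟨v, hvD⟩ : { v // v ∈ Dfin }) ≠ i := by
        intro hc
        exact hv (congrArg Subtype.val hc)
      rw [Function.update_of_ne this]
    · rw [dif_neg hvD, dif_neg hvD]
  -- the energy difference identity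
  have hEdiff : ∀ t : ℝ,
      E (Function.update p i t) - E p
        = 2 * ∑ y ∈ W.nbhd x, W.ν x y * ((t - H y)^2 - (H x - H y)^2) := by
    intro t
    have hpx : uval p x = H x := rfl
    set pt := Function.update p i t with hpt
    have hux : uval pt x = t := huval_upd_self t
    have huy : ∀ v, v ≠ x → uval pt v = H v := fun v hv => huval_upd_ne t v hv
    set d : V → V → ℝ := fun z y =>
      W.ν z y * ((uval pt z - uval pt y)^2 - (H z - H y)^2) with hd
    have hEd : E pt - E p = ∑ z ∈ Tfin, ∑ y ∈ W.nbhd z, d z y := by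
      simp only [hE, hd, ← Finset.sum_sub_distrib]
      refine Finset.sum_congr rfl (fun z _ => ?_)
      refine Finset.sum_congr rfl (fun y _ => ?_)
      have : H z = uval p z := rfl
      ring
    have hdzero : ∀ z y, z ≠ x → y ≠ x → d z y = 0 := by
      intro z y hz hy
      simp only [hd, huy z hz, huy y hy]
      ring
    -- split off the row z = x
    have hxT : x ∈ Tfin := Finset.mem_union_left _ hxDfin
    rw [← Finset.add_sum_erase _ _ hxT] at hEd
    -- the row at x
    have hrow : ∑ y ∈ W.nbhd x, d x y
        = ∑ y ∈ W.nbhd x, W.ν x y * ((t - H y)^2 - (H x - H y)^2) := by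
      refine Finset.sum_congr rfl (fun y hy => ?_)
      simp only [hd, hux, huy y (W.ne_of_mem_nbhd hy)]
    -- the column at x
    have hcol : ∑ z ∈ Tfin.erase x, ∑ y ∈ W.nbhd z, d z y
        = ∑ z ∈ W.nbhd x, W.ν x z * ((t - H z)^2 - (H x - H z)^2) := by
      have h1 : ∀ z ∈ Tfin.erase x, ∑ y ∈ W.nbhd z, d z y
          = if x ∈ W.nbhd z then d z x else 0 := by
        intro z hz
        have hzx : z ≠ x := Finset.ne_of_mem_erase hz
        have : ∀ y ∈ W.nbhd z, d z y = if y = x then d z x else 0 := by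
          intro y hy
          by_cases hyx : y = x
          · rw [if_pos hyx, hyx]
          · rw [if_neg hyx]; exact hdzero z y hzx hyx
        rw [Finset.sum_congr rfl this, Finset.sum_ite_eq' (W.nbhd z) x (fun _ => d z x)]
      rw [Finset.sum_congr rfl h1, ← Finset.sum_filter]
      have hfilt : (Tfin.erase x).filter (fun z => x ∈ W.nbhd z) = W.nbhd x := by
        ext z
        simp only [Finset.mem_filter, Finset.mem_erase]
        constructor
        · rintro ⟨⟨_, _⟩, hxz⟩
          exact W.mem_nbhd_of_adj (W.symm (W.adj_of_mem_nbhd hxz))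
        · intro hz
          exact ⟨⟨W.ne_of_mem_nbhd hz, hnbhdT z hz⟩,
            W.mem_nbhd_of_adj (W.symm (W.adj_of_mem_nbhd hz))⟩
      rw [hfilt]
      refine Finset.sum_congr rfl (fun z hz => ?_)
      simp only [hd, hux, huy z (W.ne_of_mem_nbhd hz)]
      rw [W.ν_symm z x]
      ring
    rw [hrow, hcol] at hEd
    rw [hEd]
    ring
  -- the quadratic difference at tbar
  have hqdiff : ∑ y ∈ W.nbhd x, W.ν x y * ((tbar - H y)^2 - (H x - H y)^2)
      = -(W.mu x * (H x - tbar)^2) := by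
    have hterm : ∀ y ∈ W.nbhd x, W.ν x y * ((tbar - H y)^2 - (H x - H y)^2)
        = W.ν x y * (tbar^2 - (H x)^2) - 2*(tbar - H x) * (W.ν x y * H y) := by
      intro y _; ring
    rw [Finset.sum_congr rfl hterm, Finset.sum_sub_distrib, ← Finset.sum_mul, ← Finset.mul_sum,
      hsum_eq]
    have : ∑ y ∈ W.nbhd x, W.ν x y = W.mu x := rfl
    rw [this]
    ring
  -- the updated point is in the box
  have hupdK : Function.update p i tbar ∈ K := by
    intro j _
    by_cases hj : j = i
    · rw [hj, Function.update_self]; exact htbarbox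
    · rw [Function.update_of_ne hj]; exact hpK j (Set.mem_univ j)
  have hmin' : E p ≤ E (Function.update p i tbar) := hpmin hupdK
  have hEq : E (Function.update p i tbar) - E p = -(2 * (W.mu x * (H x - tbar)^2)) := by
    rw [hEdiff tbar, hqdiff]; ring
  have hsq : (H x - tbar)^2 ≤ 0 := by nlinarith
  have hxt : H x = tbar := by nlinarith [sq_nonneg (H x - tbar)]
  -- conclude harmonicity
  have hlap : W.lap H x = (∑ y ∈ W.nbhd x, W.ν x y * H y) - W.mu x * H x := by
    unfold lap
    have : ∀ y ∈ W.nbhd x, W.ν x y * (H y - H x) = W.ν x y * H y - W.ν x y * H x := by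
      intro y _; ring
    rw [Finset.sum_congr rfl this, Finset.sum_sub_distrib, ← Finset.sum_mul]
    rfl
  rw [hlap, hsum_eq, hxt]
  ring

end WeightedGraph
namespace WeightedGraph

variable {V : Type} (W : WeightedGraph V)

lemma lap_neg (H : V → ℝ) (x : V) : W.lap (fun v => -H v) x = -W.lap H x := by
  unfold lap
  rw [← Finset.sum_neg_distrib]
  refine Finset.sum_congr rfl (fun y _ => ?_)
  ring

/-- At an interior maximum, all neighbours attain the same value. -/
lemma nbhd_eq_of_max {H : V → ℝ} {b : V} (hlap : W.lap H b = 0)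
    (hmax : ∀ y ∈ W.nbhd b, H y ≤ H b) : ∀ y ∈ W.nbhd b, H y = H b := by
  have hterms : ∀ y ∈ W.nbhd b, W.ν b y * (H y - H b) ≤ 0 := by
    intro y hy
    have h1 : H y - H b ≤ 0 := by linarith [hmax y hy]
    exact mul_nonpos_of_nonneg_of_nonpos (W.ν_nonneg b y) h1
  have hzero : ∀ y ∈ W.nbhd b, W.ν b y * (H y - H b) = 0 :=
    (Finset.sum_eq_zero_iff_of_nonpos hterms).1 hlap
  intro y hy
  have h2 := hzero y hy
  have h3 : 0 < W.ν b y := W.nu_pos_of_adj (W.adj_of_mem_nbhd hy)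
  have h4 : H y - H b = 0 := by
    rcases mul_eq_zero.1 h2 with h | h
    · exact absurd h (ne_of_gt h3)
    · exact h
  linarith

/-- Maximum principle on a finite set with nonempty boundary. -/
lemma harm_max_principle {D : Set V} (hD : D.Finite) (hbne : (W.bdry D).Nonempty)
    {H : V → ℝ} (hharm : W.HarmOn H D) {m : ℝ} (hbd : ∀ b ∈ W.bdry D, H b ≤ m) :
    ∀ x ∈ D, H x ≤ m := by
  classical
  intro x hx
  have hTf : (D ∪ W.bdry D).Finite := hD.union (W.bdry_finite hD)
  set Tfin : Finset V := hTf.toFinset with hT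
  have hTne : Tfin.Nonempty := by
    obtain ⟨b, hb⟩ := hbne
    exact ⟨b, hTf.mem_toFinset.2 (Set.mem_union_right _ hb)⟩
  obtain ⟨a, haT, hamax⟩ := Finset.exists_max_image Tfin H hTne
  have hxt : x ∈ Tfin := hTf.mem_toFinset.2 (Set.mem_union_left _ hx)
  by_cases ham : H a ≤ m
  · exact le_trans (hamax x hxt) ham
  push_neg at ham
  -- the max is interior
  have haD : a ∈ D := by
    rcases hTf.mem_toFinset.1 haT with h | h
    · exact h
    · exact absurd (hbd a h) (not_le.2 ham)
  -- neighbours of points of T are in T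
  have hnbT : ∀ z ∈ D, ∀ y ∈ W.nbhd z, y ∈ Tfin := by
    intro z hz y hy
    by_cases hyD : y ∈ D
    · exact hTf.mem_toFinset.2 (Set.mem_union_left _ hyD)
    · exact hTf.mem_toFinset.2 (Set.mem_union_right _ ⟨hyD, z, hz, W.adj_of_mem_nbhd hy⟩)
  -- propagation
  have key : ∀ c, Relation.ReflTransGen W.Adj a c → (c ∈ D ∧ H c = H a) := by
    intro c hc
    induction hc with
    | refl => exact ⟨haD, rfl⟩
    | @tail b c hab hbc ih =>
      obtain ⟨hbD, hba⟩ := ih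
      have hcm : c ∈ W.nbhd b := W.mem_nbhd_of_adj hbc
      have hmaxnb : ∀ y ∈ W.nbhd b, H y ≤ H b := by
        intro y hy
        rw [hba]
        exact hamax y (hnbT b hbD y hy)
      have hc_eq : H c = H b := W.nbhd_eq_of_max (hharm b hbD) hmaxnb c hcm
      have hcD : c ∈ D := by
        by_contra hcD
        have hcb : c ∈ W.bdry D := ⟨hcD, b, hbD, hbc⟩
        have := hbd c hcb
        rw [hc_eq, hba] at this
        exact absurd this (not_le.2 ham)
      exact ⟨hcD, by rw [hc_eq, hba]⟩
  obtain ⟨b0, hb0⟩ := hbne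
  have := key b0 (W.conn a b0)
  exact absurd this.1 hb0.1

/-- Minimum principle. -/
lemma harm_min_principle {D : Set V} (hD : D.Finite) (hbne : (W.bdry D).Nonempty)
    {H : V → ℝ} (hharm : W.HarmOn H D) {m : ℝ} (hbd : ∀ b ∈ W.bdry D, m ≤ H b) :
    ∀ x ∈ D, m ≤ H x := by
  intro x hx
  have hneg : W.HarmOn (fun v => -H v) D := by
    intro z hz
    rw [W.lap_neg, hharm z hz, neg_zero]
  have := W.harm_max_principle hD hbne hneg (m := -m) (fun b hb => by
    simpa using neg_le_neg (hbd b hb)) x hx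
  linarith [this]

/-- Uniqueness: two harmonic functions with the same boundary values agree. -/
lemma harm_unique {D : Set V} (hD : D.Finite) (hbne : (W.bdry D).Nonempty)
    {H G : V → ℝ} (hH : W.HarmOn H D) (hG : W.HarmOn G D)
    (heq : ∀ b ∈ W.bdry D, H b = G b) : ∀ x ∈ D, H x = G x := by
  intro x hx
  have hdiff : W.HarmOn (fun v => H v - G v) D := by
    intro z hz
    rw [W.lap_sub, hH z hz, hG z hz, sub_zero]
  have h1 := W.harm_max_principle hD hbne hdiff (m := 0)
    (fun b hb => by rw [heq b hb]; simp) x hx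
  have h2 := W.harm_min_principle hD hbne hdiff (m := 0)
    (fun b hb => by rw [heq b hb]; simp) x hx
  simp only [sub_nonneg, sub_nonpos] at h1 h2
  linarith

end WeightedGraph
namespace WeightedGraph

variable {V : Type} (W : WeightedGraph V)

/-- One-step Harnack from controlled weights. -/
lemma edge_harnack {p₀ : ℝ} (hcw : W.ControlledWeights p₀) {H : V → ℝ} {D : Set V}
    (hharm : W.HarmOn H D) (hpos : ∀ v, 0 ≤ H v) {u v : V}
    (hu : u ∈ D) (hv : v ∈ W.nbhd u) : p₀ * H v ≤ H u := by
  have hadj : W.Adj u v := W.adj_of_mem_nbhd hv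
  have hmu : 0 < W.mu u := W.mu_pos_of_adj hadj
  have hlap : W.lap H u = 0 := hharm u hu
  have hexp : W.mu u * H u = ∑ y ∈ W.nbhd u, W.ν u y * H y := by
    have h1 : W.lap H u = (∑ y ∈ W.nbhd u, W.ν u y * H y) - W.mu u * H u := by
      unfold lap
      have h2 : ∀ y ∈ W.nbhd u, W.ν u y * (H y - H u) = W.ν u y * H y - W.ν u y * H u := by
        intro y _; ring
      rw [Finset.sum_congr rfl h2, Finset.sum_sub_distrib, ← Finset.sum_mul]
      rfl
    rw [hlap] at h1
    linarith
  have hsingle : W.ν u v * H v ≤ ∑ y ∈ W.nbhd u, W.ν u y * H y :=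
    Finset.single_le_sum (fun y _ => mul_nonneg (W.ν_nonneg u y) (hpos y)) hv
  have hcw2 : p₀ * W.mu u ≤ W.ν u v := hcw.2 u v hadj
  have h3 : p₀ * W.mu u * H v ≤ W.ν u v * H v :=
    mul_le_mul_of_nonneg_right hcw2 (hpos v)
  have h4 : p₀ * W.mu u * H v ≤ W.mu u * H u := by
    calc p₀ * W.mu u * H v ≤ W.ν u v * H v := h3
      _ ≤ ∑ y ∈ W.nbhd u, W.ν u y * H y := hsingle
      _ = W.mu u * H u := hexp.symm
  have := (mul_le_mul_iff_right₀ hmu).1 (by linarith : W.mu u * (p₀ * H v) ≤ W.mu u * H u)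
  linarith

private lemma shrink {a b c : ℝ} (ha : 0 ≤ a) (hb0 : 0 ≤ b) (hb : b ≤ 1) (hc0 : 0 ≤ c)
    (hc : c ≤ 1) : a * b * c ≤ a := by
  have h1 : a * b ≤ a := mul_le_of_le_one_right ha hb
  have h2 : a * b * c ≤ a * b := mul_le_of_le_one_right (mul_nonneg ha hb0) hc
  linarith

private lemma inv_step {C a b : ℝ} (ha : 0 < a) (hb : 0 < b) (h : C * a ≤ b) :
    C * b⁻¹ ≤ a⁻¹ := by
  rw [← div_eq_mul_inv, ← one_div, div_le_div_iff₀ hb ha]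
  linarith

private lemma rpow_neg_antitone {θ : ℝ} (hθ : 0 ≤ θ) {a b : ℝ} (ha : 0 < a) (hab : a ≤ b) :
    b ^ (-θ) ≤ a ^ (-θ) := by
  have hb : 0 < b := lt_of_lt_of_le ha hab
  rw [Real.rpow_neg (le_of_lt ha), Real.rpow_neg (le_of_lt hb)]
  have h1 : a ^ θ ≤ b ^ θ := Real.rpow_le_rpow (le_of_lt ha) hab hθ
  have := inv_step (C := 1) (Real.rpow_pos_of_pos ha θ) (Real.rpow_pos_of_pos hb θ)
    (by linarith)
  linarith

/-- The key chain lower bound: harmonic measure of a boundary point seen from the center. -/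
lemma chain_lower_bound {p₀ C₁ θ : ℝ} (hcw : W.ControlledWeights p₀) (hehi : W.EHI C₁)
    (hC₁ : 1 ≤ C₁) (hp₁ : p₀ ≤ 1) (hθ : 0 ≤ θ) (h54 : C₁ ≤ (5/4 : ℝ) ^ θ)
    {x0 y : V} {ρ : ℕ} (hy : W.dist x0 y = ρ + 1)
    {H : V → ℝ} (hharm : W.HarmOn H (W.ball x0 ρ)) (hpos : ∀ v, 0 ≤ H v) (hy1 : H y = 1) :
    p₀^5 * C₁⁻¹ * ((ρ:ℝ)+1) ^ (-θ) ≤ H x0 := by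
  have hp₀ : 0 < p₀ := hcw.1
  have hC₁0 : 0 < C₁ := lt_of_lt_of_le one_pos hC₁
  obtain ⟨z, hzr, hzadj, hzdist⟩ := W.exists_chain hy
  have hz0 : z 0 = x0 := (W.dist_eq_zero_iff.1 (hzdist 0 (Nat.zero_le _))).symm
  -- membership of chain points in the ball
  have hzD : ∀ k, k ≤ ρ → z k ∈ W.ball x0 ρ := by
    intro k hk
    show W.dist x0 (z k) ≤ ρ
    rw [hzdist k (by omega)]
    exact hk
  -- edge chain: H (z (ρ - j)) ≥ p₀^(j+1) for j ≤ ρ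
  have hedge : ∀ j, j ≤ ρ → p₀^(j+1) ≤ H (z (ρ - j)) := by
    intro j
    induction j with
    | zero =>
      intro _
      have hadj : W.Adj (z ρ) (z (ρ+1)) := hzadj ρ (by omega)
      rw [hzr] at hadj
      have := W.edge_harnack hcw hharm hpos (hzD ρ (le_refl ρ)) (W.mem_nbhd_of_adj hadj)
      rw [hy1] at this
      simpa using this
    | succ n ih =>
      intro hn
      have hih := ih (by omega)
      have hadj : W.Adj (z (ρ - (n+1))) (z (ρ - (n+1) + 1)) := hzadj _ (by omega)
      have hidx : ρ - (n+1) + 1 = ρ - n := by omega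
      rw [hidx] at hadj
      have hstep := W.edge_harnack hcw hharm hpos (hzD _ (by omega)) (W.mem_nbhd_of_adj hadj)
      calc p₀^(n+1+1) = p₀ * p₀^(n+1) := by ring
        _ ≤ p₀ * H (z (ρ - n)) := by
            exact mul_le_mul_of_nonneg_left hih (le_of_lt hp₀)
        _ ≤ H (z (ρ - (n+1))) := hstep
  -- a convenient positivity fact
  have hrpowpos : ∀ m : ℕ, (0:ℝ) < ((m:ℝ)+1) ^ (-θ) := by
    intro m
    exact Real.rpow_pos_of_pos (by positivity) _
  by_cases hsmall : ρ ≤ 4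
  · -- pure edge case
    have h1 := hedge ρ (le_refl ρ)
    rw [Nat.sub_self, hz0] at h1
    have h2 : p₀^(ρ+1) ≥ p₀^5 := by
      apply pow_le_pow_of_le_one (le_of_lt hp₀) hp₁
      omega
    have h3 : ((ρ:ℝ)+1) ^ (-θ) ≤ 1 := by
      apply Real.rpow_le_one_of_one_le_of_nonpos
      · have : (0:ℝ) ≤ (ρ:ℝ) := Nat.cast_nonneg ρ
        linarith
      · linarith
    have h4 : C₁⁻¹ ≤ 1 := by
      rw [inv_le_one_iff₀]
      right; exact hC₁
    have h6 : p₀^5 * C₁⁻¹ * ((ρ:ℝ)+1) ^ (-θ) ≤ p₀^5 :=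
      shrink (le_of_lt (pow_pos hp₀ 5)) (le_of_lt (inv_pos.2 hC₁0)) h4
        (le_of_lt (hrpowpos ρ)) h3
    linarith
  · -- dyadic case
    push_neg at hsmall
    -- EHI step, packaged
    have hEHIstep : ∀ g : ℕ, 4 ≤ g → g ≤ ρ → ∀ w' : V, W.dist (z (ρ - g)) w' ≤ g / 2 →
        C₁⁻¹ * H (z (ρ - g)) ≤ H w' := by
      intro g hg4 hgρ w' hw'
      set s : ℕ := g / 2 with hs
      have hs1 : 1 ≤ s := by omega
      have hball : W.ball (z (ρ - g)) (2 * s) ⊆ W.ball x0 ρ := by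
        intro u hu
        have h1 : W.dist (z (ρ - g)) u ≤ 2 * s := hu
        have h2 : W.dist x0 u ≤ W.dist x0 (z (ρ - g)) + W.dist (z (ρ - g)) u := W.dist_triangle
        have h3 : W.dist x0 (z (ρ - g)) = ρ - g := hzdist _ (by omega)
        show W.dist x0 u ≤ ρ
        have : 2 * s ≤ g := by omega
        omega
      have hharm' : W.HarmOn H (W.ball (z (ρ - g)) (2 * s)) := W.harmOn_mono hball hharm
      have happ := hehi (z (ρ - g)) s hs1 H hpos hharm' (z (ρ - g))
        (W.mem_ball_self _ _) w' hw'
      calc C₁⁻¹ * H (z (ρ - g)) ≤ C₁⁻¹ * (C₁ * H w') :=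
            mul_le_mul_of_nonneg_left happ (le_of_lt (inv_pos.2 hC₁0))
        _ = H w' := by field_simp
    -- the key numeric inequality for the dyadic step
    have hkey : ∀ g : ℕ, 4 ≤ g →
        C₁ * (((g + g / 2 : ℕ):ℝ)+1) ^ (-θ) ≤ ((g:ℝ)+1) ^ (-θ) := by
      intro g hg4
      have hnat : 5 * (g + 1) ≤ 4 * ((g + g / 2) + 1) := by omega
      have hreal : (5/4 : ℝ) * ((g:ℝ)+1) ≤ ((g + g / 2 : ℕ):ℝ) + 1 := by
        have := (Nat.cast_le (α := ℝ)).2 hnat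
        push_cast at this ⊢
        linarith
      have h1 : ((5/4 : ℝ) * ((g:ℝ)+1)) ^ θ ≤ (((g + g / 2 : ℕ):ℝ) + 1) ^ θ :=
        Real.rpow_le_rpow (by positivity) hreal hθ
      have h2 : ((5/4 : ℝ) * ((g:ℝ)+1)) ^ θ = (5/4:ℝ)^θ * ((g:ℝ)+1)^θ :=
        Real.mul_rpow (by norm_num) (by positivity)
      have h3 : C₁ * ((g:ℝ)+1)^θ ≤ (((g + g / 2 : ℕ):ℝ) + 1) ^ θ := by
        have h4 : C₁ * ((g:ℝ)+1)^θ ≤ (5/4:ℝ)^θ * ((g:ℝ)+1)^θ :=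
          mul_le_mul_of_nonneg_right h54 (le_of_lt (Real.rpow_pos_of_pos (by positivity) θ))
        linarith [h1, h2.symm.le]
      rw [Real.rpow_neg (by positivity), Real.rpow_neg (by positivity)]
      exact inv_step (Real.rpow_pos_of_pos (by positivity) θ)
        (Real.rpow_pos_of_pos (by positivity) θ) h3
    -- dyadic recursion
    have hdyadic : ∀ n : ℕ, ∀ g : ℕ, 4 ≤ g → g ≤ ρ → ρ - g ≤ n →
        p₀^5 * ((g:ℝ)+1) ^ (-θ) ≤ H (z (ρ - g)) →
        p₀^5 * C₁⁻¹ * ((ρ:ℝ)+1) ^ (-θ) ≤ H x0 := by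
      intro n
      induction n with
      | zero =>
        intro g hg4 hgρ hn hlow
        have hgeq : g = ρ := by omega
        subst hgeq
        rw [Nat.sub_self, hz0] at hlow
        have h4 : C₁⁻¹ ≤ 1 := by
          rw [inv_le_one_iff₀]; right; exact hC₁
        have h6 : p₀^5 * C₁⁻¹ * ((g:ℝ)+1) ^ (-θ) = (p₀^5 * ((g:ℝ)+1) ^ (-θ)) * C₁⁻¹ := by ring
        have h7 : (p₀^5 * ((g:ℝ)+1) ^ (-θ)) * C₁⁻¹ ≤ p₀^5 * ((g:ℝ)+1) ^ (-θ) :=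
          mul_le_of_le_one_right (by positivity) h4
        linarith
      | succ n ih =>
        intro g hg4 hgρ hn hlow
        by_cases hgeq : g = ρ
        · subst hgeq
          rw [Nat.sub_self, hz0] at hlow
          have h4 : C₁⁻¹ ≤ 1 := by
            rw [inv_le_one_iff₀]; right; exact hC₁
          have h6 : p₀^5 * C₁⁻¹ * ((g:ℝ)+1) ^ (-θ) = (p₀^5 * ((g:ℝ)+1) ^ (-θ)) * C₁⁻¹ := by
            ring
          have h7 : (p₀^5 * ((g:ℝ)+1) ^ (-θ)) * C₁⁻¹ ≤ p₀^5 * ((g:ℝ)+1) ^ (-θ) :=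
            mul_le_of_le_one_right (by positivity) h4
          linarith
        · have hglt : g < ρ := lt_of_le_of_ne hgρ hgeq
          set s : ℕ := g / 2 with hs
          by_cases hcap : ρ ≤ g + s
          · -- jump straight to x0
            have hdist : W.dist (z (ρ - g)) x0 ≤ s := by
              rw [W.dist_comm', ← hz0]
              have h1 : W.dist (z 0) (z (ρ - g)) ≤ (ρ - g) - 0 :=
                W.chain_dist_le hzadj 0 (ρ - g) (Nat.zero_le _) (by omega)
              rw [hz0] at h1 ⊢
              omega
            have := hEHIstep g hg4 hgρ x0 hdist
            have hmono : ((ρ:ℝ)+1) ^ (-θ) ≤ ((g:ℝ)+1) ^ (-θ) := by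
              apply rpow_neg_antitone hθ (by positivity)
              have : (g:ℝ) ≤ (ρ:ℝ) := Nat.cast_le.2 hgρ
              linarith
            calc p₀^5 * C₁⁻¹ * ((ρ:ℝ)+1) ^ (-θ) ≤ p₀^5 * C₁⁻¹ * ((g:ℝ)+1) ^ (-θ) := by
                  apply mul_le_mul_of_nonneg_left hmono
                  positivity
              _ = C₁⁻¹ * (p₀^5 * ((g:ℝ)+1) ^ (-θ)) := by ring
              _ ≤ C₁⁻¹ * H (z (ρ - g)) := by
                  apply mul_le_mul_of_nonneg_left hlow
                  positivity
              _ ≤ H x0 := this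
          · -- move to gap g + s
            push_neg at hcap
            set g' : ℕ := g + s with hg'
            have hdist : W.dist (z (ρ - g)) (z (ρ - g')) ≤ s := by
              have h1 : W.dist (z (ρ - g')) (z (ρ - g)) ≤ (ρ - g) - (ρ - g') :=
                W.chain_dist_le hzadj (ρ - g') (ρ - g) (by omega) (by omega)
              rw [W.dist_comm']
              omega
            have hstep := hEHIstep g hg4 hgρ (z (ρ - g')) hdist
            have hlow' : p₀^5 * ((g' : ℝ)+1) ^ (-θ) ≤ H (z (ρ - g')) := by
              have h1 : C₁ * ((g' : ℝ)+1) ^ (-θ) ≤ ((g:ℝ)+1) ^ (-θ) := hkey g hg4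
              have h2 : p₀^5 * (C₁ * ((g' : ℝ)+1) ^ (-θ)) ≤ p₀^5 * ((g:ℝ)+1) ^ (-θ) := by
                apply mul_le_mul_of_nonneg_left h1
                positivity
              have h3 : C₁⁻¹ * (p₀^5 * ((g:ℝ)+1) ^ (-θ)) ≤ C₁⁻¹ * H (z (ρ - g)) := by
                apply mul_le_mul_of_nonneg_left hlow
                positivity
              calc p₀^5 * ((g' : ℝ)+1) ^ (-θ)
                  = C₁⁻¹ * (p₀^5 * (C₁ * ((g' : ℝ)+1) ^ (-θ))) := by
                    field_simp
                _ ≤ C₁⁻¹ * (p₀^5 * ((g:ℝ)+1) ^ (-θ)) := by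
                    apply mul_le_mul_of_nonneg_left h2
                    positivity
                _ ≤ C₁⁻¹ * H (z (ρ - g)) := h3
                _ ≤ H (z (ρ - g')) := hstep
            exact ih g' (by omega) (by omega) (by omega) hlow'
    -- start the recursion at gap 4
    have hstart := hedge 4 (by omega)
    have h40 : p₀^5 * ((4 : ℝ)+1) ^ (-θ) ≤ H (z (ρ - 4)) := by
      have h3 : ((4 : ℝ)+1) ^ (-θ) ≤ 1 := by
        apply Real.rpow_le_one_of_one_le_of_nonpos (by norm_num) (by linarith)
      have h5 : (0:ℝ) < p₀^5 := pow_pos hp₀ 5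
      have : p₀^(4+1) = p₀^5 := by norm_num
      rw [this] at hstart
      nlinarith [hrpowpos 4]
    exact hdyadic (ρ - 4) 4 (le_refl 4) (by omega) (by omega) h40

end WeightedGraph
namespace WeightedGraph

variable {V : Type} (W : WeightedGraph V)

/-- Cardinality bound for spheres. -/
lemma sphere_card_bound {p₀ C₁ θ : ℝ} (hcw : W.ControlledWeights p₀) (hehi : W.EHI C₁)
    (hC₁ : 1 ≤ C₁) (hp₁ : p₀ ≤ 1) (hθ : 0 ≤ θ) (h54 : C₁ ≤ (5/4 : ℝ) ^ θ)
    (x0 : V) (r : ℕ) (hr : 1 ≤ r) :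
    ((W.sphere x0 r).ncard : ℝ) * (p₀^5 * C₁⁻¹ * ((r:ℕ):ℝ) ^ (-θ)) ≤ 1 := by
  classical
  have hp₀ : 0 < p₀ := hcw.1
  have hC₁0 : 0 < C₁ := lt_of_lt_of_le one_pos hC₁
  obtain ⟨ρ, rfl⟩ : ∃ ρ, r = ρ + 1 := ⟨r - 1, by omega⟩
  have hSfin : (W.sphere x0 (ρ+1)).Finite := W.sphere_finite x0 (ρ+1)
  set Sf : Finset V := hSfin.toFinset with hSf
  rcases Finset.eq_empty_or_nonempty Sf with hSe | hSne
  · have : (W.sphere x0 (ρ+1)).ncard = 0 := by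
      rw [Set.ncard_eq_toFinset_card _ hSfin, ← hSf, hSe, Finset.card_empty]
    rw [this]
    norm_num
  have hbdry : W.bdry (W.ball x0 ρ) = W.sphere x0 (ρ+1) := W.bdry_ball_eq_sphere x0 ρ
  have hDfin : (W.ball x0 ρ).Finite := W.ball_finite x0 ρ
  have hbne : (W.bdry (W.ball x0 ρ)).Nonempty := by
    obtain ⟨y, hy⟩ := hSne
    exact ⟨y, by rw [hbdry]; exact hSfin.mem_toFinset.1 hy⟩
  -- harmonic measure functions
  have hsol : ∀ y : V, ∃ H : V → ℝ,
      (∀ v, v ∉ W.ball x0 ρ → H v = if v = y then 1 else 0) ∧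
      W.HarmOn H (W.ball x0 ρ) :=
    fun y => W.exists_harmonic_extension (W.ball x0 ρ) hDfin (fun v => if v = y then 1 else 0)
  choose Hf hoff hharm using hsol
  have hpos : ∀ y v, 0 ≤ Hf y v := by
    intro y v
    have hbv : ∀ b ∈ W.bdry (W.ball x0 ρ), (0:ℝ) ≤ Hf y b := by
      intro b hb
      rw [hoff y b hb.1]
      split <;> norm_num
    by_cases hv : v ∈ W.ball x0 ρ
    · exact W.harm_min_principle hDfin hbne (hharm y) hbv v hv
    · rw [hoff y v hv]
      split <;> norm_num
  -- each harmonic measure is bounded below at the center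
  have hlow : ∀ y ∈ Sf, p₀^5 * C₁⁻¹ * ((ρ:ℝ)+1) ^ (-θ) ≤ Hf y x0 := by
    intro y hy
    have hyS : W.dist x0 y = ρ + 1 := hSfin.mem_toFinset.1 hy
    have hynD : y ∉ W.ball x0 ρ := by
      show ¬ (W.dist x0 y ≤ ρ)
      omega
    have hy1 : Hf y y = 1 := by rw [hoff y y hynD, if_pos rfl]
    exact W.chain_lower_bound hcw hehi hC₁ hp₁ hθ h54 hyS (hharm y) (hpos y) hy1
  -- total harmonic measure is 1
  have hsum : ∑ y ∈ Sf, Hf y x0 = 1 := by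
    have hΦharm : W.HarmOn (fun v => ∑ y ∈ Sf, Hf y v) (W.ball x0 ρ) := by
      intro x hx
      rw [W.lap_finset_sum]
      exact Finset.sum_eq_zero (fun y _ => hharm y x hx)
    have hconst : W.HarmOn (fun _ => (1:ℝ)) (W.ball x0 ρ) := fun x _ => W.lap_const 1 x
    have heq : ∀ b ∈ W.bdry (W.ball x0 ρ), (∑ y ∈ Sf, Hf y b) = (fun _ => (1:ℝ)) b := by
      intro b hb
      have hbS : b ∈ Sf := by
        rw [hSf, hSfin.mem_toFinset]
        rw [hbdry] at hb
        exact hb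
      have : ∀ y ∈ Sf, Hf y b = if b = y then (1:ℝ) else 0 :=
        fun y _ => hoff y b hb.1
      rw [Finset.sum_congr rfl this, Finset.sum_ite_eq Sf b (fun _ => (1:ℝ)), if_pos hbS]
    have hx0 : x0 ∈ W.ball x0 ρ := W.mem_ball_self x0 ρ
    exact W.harm_unique hDfin hbne hΦharm hconst heq x0 hx0
  -- count
  have hcard : Sf.card • (p₀^5 * C₁⁻¹ * ((ρ:ℝ)+1) ^ (-θ)) ≤ ∑ y ∈ Sf, Hf y x0 :=
    Finset.card_nsmul_le_sum Sf (fun y => Hf y x0) _ hlow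
  rw [hsum, nsmul_eq_mul] at hcard
  have hncard : (W.sphere x0 (ρ+1)).ncard = Sf.card :=
    Set.ncard_eq_toFinset_card _ hSfin
  rw [hncard]
  have hcast : (((ρ+1:ℕ)):ℝ) = (ρ:ℝ) + 1 := by push_cast; ring
  rw [hcast]
  exact hcard

end WeightedGraph


/-- **Theorem 1.** If a weighted graph with controlled weights (constant `p₀`)
satisfies the EHI with constant `C₁`, then there are constants `C`, `θ`,
depending only on `C₁` and `p₀`, such that `|B(x₀,R)| ≤ C·R^{1+θ}` for all
`x₀` and all `R ≥ 1`. -/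
theorem ehi_implies_polynomial_growth (C₁ p₀ : ℝ) :
    ∃ C θ : ℝ, 0 < C ∧ 0 < θ ∧
      ∀ (V : Type) (W : WeightedGraph V),
        W.ControlledWeights p₀ → W.EHI C₁ →
        ∀ x₀ : V, ∀ R : ℕ, 1 ≤ R →
          ((W.ball x₀ R).ncard : ℝ) ≤ C * (R : ℝ) ^ ((1 : ℝ) + θ) := by
  classical
  refine ⟨1 + (max C₁ 1) * (max p₀⁻¹ 1)^5, max (Real.logb (5/4) C₁) 1, ?_, ?_, ?_⟩
  · have h1 : (0:ℝ) < max C₁ 1 := lt_of_lt_of_le one_pos (le_max_right _ _)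
    have h2 : (0:ℝ) < max p₀⁻¹ 1 := lt_of_lt_of_le one_pos (le_max_right _ _)
    have h3 : (0:ℝ) < (max p₀⁻¹ 1)^5 := pow_pos h2 5
    nlinarith
  · exact lt_of_lt_of_le one_pos (le_max_right _ _)
  intro V W hcw hehi x₀ R hR
  set θ : ℝ := max (Real.logb (5/4) C₁) 1 with hθdef
  have hθ1 : 1 ≤ θ := le_max_right _ _
  have hθ0 : 0 ≤ θ := by linarith
  have hp₀ : 0 < p₀ := hcw.1
  -- C₁ ≥ 1
  have hC₁ : 1 ≤ C₁ := by
    have hconstharm : W.HarmOn (fun _ => (1:ℝ)) (W.ball x₀ (2*1)) :=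
      fun x _ => W.lap_const 1 x
    have h := hehi x₀ 1 le_rfl (fun _ => 1) (fun _ => zero_le_one) hconstharm x₀
      (W.mem_ball_self _ _) x₀ (W.mem_ball_self _ _)
    simpa using h
  have hC₁0 : 0 < C₁ := lt_of_lt_of_le one_pos hC₁
  have h54 : C₁ ≤ (5/4 : ℝ) ^ θ := by
    have hlogb : (5/4:ℝ) ^ (Real.logb (5/4) C₁) = C₁ :=
      Real.rpow_logb (by norm_num) (by norm_num) hC₁0
    calc C₁ = (5/4:ℝ) ^ (Real.logb (5/4) C₁) := hlogb.symm
      _ ≤ (5/4:ℝ) ^ θ :=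
          Real.rpow_le_rpow_of_exponent_le (by norm_num) (le_max_left _ _)
  have hR1 : (1:ℝ) ≤ (R:ℝ) := by exact_mod_cast hR
  have hRpos : (0:ℝ) < (R:ℝ) := by linarith
  have hRθ : 1 ≤ (R:ℝ)^θ := Real.one_le_rpow hR1 hθ0
  have hsplit : (R:ℝ)^((1:ℝ)+θ) = (R:ℝ) * (R:ℝ)^θ := by
    rw [Real.rpow_add hRpos, Real.rpow_one]
  have hA : 1 ≤ (R:ℝ) * (R:ℝ)^θ := by nlinarith
  by_cases hiso : ∃ w, W.Adj x₀ w
  · obtain ⟨w, hw⟩ := hiso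
    have hp₁ : p₀ ≤ 1 := by
      have h1 : p₀ * W.mu x₀ ≤ W.ν x₀ w := hcw.2 x₀ w hw
      have h2 : W.ν x₀ w ≤ W.mu x₀ := W.nu_le_mu hw
      have h3 : 0 < W.mu x₀ := W.mu_pos_of_adj hw
      nlinarith
    set K : ℝ := C₁ * (p₀⁻¹)^5 with hK
    have hKpos : 0 < K := mul_pos hC₁0 (pow_pos (inv_pos.2 hp₀) 5)
    have hsph : ∀ r : ℕ, 1 ≤ r → ((W.sphere x₀ r).ncard : ℝ) ≤ K * ((r:ℕ):ℝ)^θ := by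
      intro r hr
      have hb := W.sphere_card_bound hcw hehi hC₁ hp₁ hθ0 h54 x₀ r hr
      have hrpos : (0:ℝ) < ((r:ℕ):ℝ) := by exact_mod_cast (by omega : 0 < r)
      have hεpos : 0 < p₀^5 * C₁⁻¹ * ((r:ℕ):ℝ)^(-θ) :=
        mul_pos (mul_pos (pow_pos hp₀ 5) (inv_pos.2 hC₁0)) (Real.rpow_pos_of_pos hrpos _)
      have hprod : (p₀^5 * C₁⁻¹ * ((r:ℕ):ℝ)^(-θ)) * (K * ((r:ℕ):ℝ)^θ) = 1 := by
        rw [hK, Real.rpow_neg (le_of_lt hrpos)]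
        have hrθ : (0:ℝ) < ((r:ℕ):ℝ)^θ := Real.rpow_pos_of_pos hrpos θ
        field_simp
      have h2 : ((W.sphere x₀ r).ncard : ℝ) * (p₀^5 * C₁⁻¹ * ((r:ℕ):ℝ)^(-θ))
          ≤ (K * ((r:ℕ):ℝ)^θ) * (p₀^5 * C₁⁻¹ * ((r:ℕ):ℝ)^(-θ)) := by
        rw [mul_comm (K * ((r:ℕ):ℝ)^θ)]
        rw [hprod]
        exact hb
      exact le_of_mul_le_mul_right h2 hεpos
    have hball : ∀ n : ℕ, ((W.ball x₀ n).ncard : ℝ) ≤ 1 + K * n * ((n:ℕ):ℝ)^θ := by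
      intro n
      induction n with
      | zero =>
        rw [W.ball_zero, Set.ncard_singleton]
        simp
      | succ n ih =>
        have hdisj : Disjoint (W.ball x₀ n) (W.sphere x₀ (n+1)) := by
          rw [Set.disjoint_left]
          intro a ha ha'
          have h1 : W.dist x₀ a ≤ n := ha
          have h2 : W.dist x₀ a = n + 1 := ha'
          omega
        have hcount : (W.ball x₀ (n+1)).ncard
            = (W.ball x₀ n).ncard + (W.sphere x₀ (n+1)).ncard := by
          rw [W.ball_succ]
          exact Set.ncard_union_eq hdisj (W.ball_finite x₀ n) (W.sphere_finite x₀ (n+1))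
        have hs := hsph (n+1) (by omega)
        have hmono : ((n:ℕ):ℝ)^θ ≤ (((n+1:ℕ)):ℝ)^θ :=
          Real.rpow_le_rpow (Nat.cast_nonneg n) (by push_cast; linarith) hθ0
        have hKn : K * n * ((n:ℕ):ℝ)^θ ≤ K * n * (((n+1:ℕ)):ℝ)^θ :=
          mul_le_mul_of_nonneg_left hmono (by positivity)
        rw [hcount]
        push_cast at ih hs hKn ⊢
        nlinarith
    have hfin := hball R
    rw [hsplit]
    have hKbar : (max C₁ 1) * (max p₀⁻¹ 1)^5 = K := by
      rw [hK, max_eq_left hC₁, max_eq_left ((one_le_inv₀ hp₀).2 hp₁)]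
    rw [hKbar]
    have hRR : K * (R:ℝ) * ((R:ℕ):ℝ)^θ = K * ((R:ℝ) * (R:ℝ)^θ) := by ring
    nlinarith [hfin, hKpos, hA]
  · -- isolated vertex: the graph is a single point
    have hall : ∀ y : V, y = x₀ := by
      intro y
      rcases (W.conn x₀ y).cases_head with h | ⟨c, hc, _⟩
      · exact h.symm
      · exact absurd ⟨c, hc⟩ hiso
    have hsingle : W.ball x₀ R = {x₀} := by
      ext y
      simp only [Set.mem_singleton_iff]
      constructor
      · intro _; exact hall y
      · intro h; rw [h]; exact W.mem_ball_self x₀ R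
    rw [hsingle, Set.ncard_singleton]
    have h1 : (0:ℝ) < max C₁ 1 := lt_of_lt_of_le one_pos (le_max_right _ _)
    have h2 : (0:ℝ) < max p₀⁻¹ 1 := lt_of_lt_of_le one_pos (le_max_right _ _)
    have h3 : (0:ℝ) < (max p₀⁻¹ 1)^5 := pow_pos h2 5
    rw [hsplit]
    have h4 : (1:ℝ) ≤ 1 + max C₁ 1 * (max p₀⁻¹ 1)^5 := by nlinarith
    push_cast
    calc (1:ℝ) ≤ (R:ℝ) * (R:ℝ)^θ := hA
      _ ≤ (1 + max C₁ 1 * (max p₀⁻¹ 1)^5) * ((R:ℝ) * (R:ℝ)^θ) :=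
          le_mul_of_one_le_left (by linarith) h4
end

section
/- Uniform coupling implies the oscillation inequality: if a weighted graph satisfies uniform co-adapted coupling UC(K) with success probability p₁ > 0, then it satisfies OI(K) with ρ = 1 − p₁; that is, for every x₀ ∈ G, R ≥ 1, and every bounded function h harmonic on B(x₀,KR), Osc(h, B(x₀,R)) ≤ (1−p₁) · Osc(h, B̄(x₀,KR)). -/
/-- The joint law at the stopping time `T = τ_C ∧ τ_E` of a co-adapted coupling
of two continuous-time simple random walks started at `y₁`, `y₂` and stopped
upon meeting or upon leaving `B`: a sub-coupling measure `π` on pairs of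
points of `B̄`, with total mass one, whose marginals integrate every function
harmonic on `B` to its initial value (optional stopping). -/
structure StoppedCoupling {V : Type} (W : WeightedGraph V) (B : Set V)
    (y₁ y₂ : V) where
  π : V × V → ℝ
  nonneg : ∀ a, 0 ≤ π a
  mem_supp : ∀ a : V × V, π a ≠ 0 → a.1 ∈ W.cl B ∧ a.2 ∈ W.cl B
  total : ∑' a : V × V, π a = 1
  mean_fst : ∀ h : V → ℝ, W.HarmOn h B → ∑' a : V × V, π a * h a.1 = h y₁
  mean_snd : ∀ h : V → ℝ, W.HarmOn h B → ∑' a : V × V, π a * h a.2 = h y₂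

/-- **Uniform coupling implies the oscillation inequality OI(K) with
`ρ = 1 − p₁`.**  If for all `x₀`, `R ≥ 1` and `y₁, y₂ ∈ B(x₀,R)` the walks
can be coupled so that they meet before exiting `B(x₀,KR)` with probability
`> p₁` (the event `τ_C < τ_E` is contained in the event that the stopped
positions agree), then for every `h` harmonic and bounded on `B(x₀,KR)`,
`Osc(h, B(x₀,R)) ≤ (1−p₁)·Osc(h, B̄(x₀,KR))`. -/
theorem uniform_coupling_implies_oscillation_inequality
    {V : Type} (W : WeightedGraph V) (K p₁ : ℝ) (hK : 1 < K) (hp₁ : 0 < p₁)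
    (hUC : ∀ x₀ : V, ∀ R : ℕ, 1 ≤ R →
      ∀ y₁ ∈ W.ball x₀ R, ∀ y₂ ∈ W.ball x₀ R,
        ∃ sc : StoppedCoupling W (W.rball x₀ (K * R)) y₁ y₂,
          p₁ < ∑' v : V, sc.π (v, v)) :
    ∀ x₀ : V, ∀ R : ℕ, 1 ≤ R →
      ∀ h : V → ℝ, W.HarmOn h (W.rball x₀ (K * R)) →
      ∀ m M : ℝ, (∀ v ∈ W.cl (W.rball x₀ (K * R)), m ≤ h v ∧ h v ≤ M) →
      ∀ y₁ ∈ W.ball x₀ R, ∀ y₂ ∈ W.ball x₀ R,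
        h y₁ - h y₂ ≤ (1 - p₁) * (M - m) := by
  classical
  intro x₀ R hR h hharm m M hmM y₁ hy₁ y₂ hy₂
  set B := W.rball x₀ (K * R) with hB
  obtain ⟨sc, hD⟩ := hUC x₀ R hR y₁ hy₁ y₂ hy₂
  -- m ≤ M since x₀ ∈ cl B
  have hx₀B : x₀ ∈ W.cl B := by
    left
    show (W.dist x₀ x₀ : ℝ) ≤ K * R
    have : W.dist x₀ x₀ = 0 := SimpleGraph.dist_self
    rw [this]
    push_cast
    positivity
  have hmM' : m ≤ M := le_trans (hmM x₀ hx₀B).1 (hmM x₀ hx₀B).2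
  have hπ : Summable sc.π := by
    by_contra hns
    have := sc.total
    rw [tsum_eq_zero_of_not_summable hns] at this
    norm_num at this
  set C : ℝ := max |m| |M| with hC
  have hbound : ∀ a : V × V, a.1 ∈ W.cl B → a.2 ∈ W.cl B →
      |h a.1| ≤ C ∧ |h a.2| ≤ C := by
    intro a h1 h2
    constructor
    · rcases abs_le_max_abs_abs (hmM a.1 h1).1 (hmM a.1 h1).2 with h'
      exact h'
    · exact abs_le_max_abs_abs (hmM a.2 h2).1 (hmM a.2 h2).2
  have hsum1 : Summable (fun a : V × V => sc.π a * h a.1) := by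
    apply Summable.of_abs
    apply Summable.of_nonneg_of_le (fun a => abs_nonneg _) _ (hπ.mul_right C)
    intro a
    by_cases hz : sc.π a = 0
    · simp [hz]
    · obtain ⟨h1, h2⟩ := sc.mem_supp a hz
      rw [abs_mul, abs_of_nonneg (sc.nonneg a)]
      exact mul_le_mul_of_nonneg_left (hbound a h1 h2).1 (sc.nonneg a)
  have hsum2 : Summable (fun a : V × V => sc.π a * h a.2) := by
    apply Summable.of_abs
    apply Summable.of_nonneg_of_le (fun a => abs_nonneg _) _ (hπ.mul_right C)
    intro a
    by_cases hz : sc.π a = 0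
    · simp [hz]
    · obtain ⟨h1, h2⟩ := sc.mem_supp a hz
      rw [abs_mul, abs_of_nonneg (sc.nonneg a)]
      exact mul_le_mul_of_nonneg_left (hbound a h1 h2).2 (sc.nonneg a)
  have hdiff : h y₁ - h y₂ = ∑' a : V × V, (sc.π a * h a.1 - sc.π a * h a.2) := by
    rw [Summable.tsum_sub hsum1 hsum2, sc.mean_fst h hharm, sc.mean_snd h hharm]
  -- diagonal and off-diagonal parts
  set F : V × V → ℝ := fun a => if a.1 = a.2 then sc.π a else 0 with hF
  set Goff : V × V → ℝ := fun a => if a.1 = a.2 then 0 else sc.π a with hG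
  have hFsum : Summable F := by
    apply Summable.of_nonneg_of_le _ _ hπ
    · intro a; by_cases hd : a.1 = a.2 <;> simp [hF, hd, sc.nonneg a]
    · intro a; by_cases hd : a.1 = a.2 <;> simp [hF, hd, sc.nonneg a]
  have hGsum : Summable Goff := by
    apply Summable.of_nonneg_of_le _ _ hπ
    · intro a; by_cases hd : a.1 = a.2 <;> simp [hG, hd, sc.nonneg a]
    · intro a; by_cases hd : a.1 = a.2 <;> simp [hG, hd, sc.nonneg a]
  have hsplit : (∑' a : V × V, F a) + (∑' a : V × V, Goff a) = 1 := by
    rw [← Summable.tsum_add hFsum hGsum, ← sc.total]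
    congr 1
    funext a
    by_cases hd : a.1 = a.2 <;> simp [hF, hG, hd]
  have hdiag : ∑' a : V × V, F a = ∑' v : V, sc.π (v, v) := by
    have hinj : Function.Injective (fun v : V => ((v, v) : V × V)) := by
      intro u v huv
      simpa using congrArg Prod.fst huv
    rw [← Function.Injective.tsum_eq hinj (f := F)]
    · congr 1
      funext v
      simp [hF]
    · intro a ha
      by_cases hd : a.1 = a.2
      · exact ⟨a.1, by ext <;> simp [hd]⟩
      · exfalso; apply ha; simp [hF, hd]
  have hGval : ∑' a : V × V, Goff a = 1 - ∑' v : V, sc.π (v, v) := by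
    rw [← hdiag]; linarith [hsplit]
  -- termwise bound
  have hterm : ∀ a : V × V, sc.π a * h a.1 - sc.π a * h a.2 ≤ (M - m) * Goff a := by
    intro a
    by_cases hd : a.1 = a.2
    · simp [hG, hd]
    · by_cases hz : sc.π a = 0
      · simp [hG, hd, hz]
      · obtain ⟨h1, h2⟩ := sc.mem_supp a hz
        have : sc.π a * h a.1 - sc.π a * h a.2 = sc.π a * (h a.1 - h a.2) := by ring
        rw [this]
        have hle : h a.1 - h a.2 ≤ M - m := by
          have := (hmM a.1 h1).2
          have := (hmM a.2 h2).1
          linarith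
        have : sc.π a * (h a.1 - h a.2) ≤ sc.π a * (M - m) :=
          mul_le_mul_of_nonneg_left hle (sc.nonneg a)
        simpa [hG, hd, mul_comm] using this
  have hmain : h y₁ - h y₂ ≤ (M - m) * (1 - ∑' v : V, sc.π (v, v)) := by
    rw [hdiff, ← hGval, ← tsum_mul_left]
    exact Summable.tsum_le_tsum hterm (hsum1.sub hsum2) (hGsum.mul_left (M - m))
  calc h y₁ - h y₂ ≤ (M - m) * (1 - ∑' v : V, sc.π (v, v)) := hmain
    _ ≤ (M - m) * (1 - p₁) := by
        apply mul_le_mul_of_nonneg_left _ (by linarith)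
        linarith
    _ = (1 - p₁) * (M - m) := by ring
end

section
/- On the lamplighter graph, started from y₁ = (−R, 1_{[−R,0]}), the probability that the random walk exits B(x₀,KR) (K < 3, δ = (3−K)/3, λ = 1−δ) at a point whose lit-lamp set meets [λR, R] is at most 2^{−δR}. Indeed, on the event of exiting through position λR before reaching −3R, every lamp in [−R, −λR) must have been switched off, which has probability at most 2^{−δR}. -/
/-- A lamp configuration: a finitely supported `{0,1}`-valued sequence on `ℤ`. -/
def Conf : Type := {ξ : ℤ →₀ ℕ // ∀ i, ξ i ≤ 1}

/-- Vertices of the lamplighter graph: lamplighter position together with a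
lamp configuration. -/
def LV : Type := ℤ × Conf

/-- Change the lamp at site `i` to the value `k ∈ {0,1}`. -/
noncomputable def confSet (ξ : Conf) (i : ℤ) (k : ℕ) (hk : k ≤ 1) : Conf :=
  ⟨Finsupp.update ξ.1 i k, by
    intro j
    rcases eq_or_ne j i with rfl | hj
    · simpa using hk
    · simpa [Finsupp.coe_update, Function.update, hj] using ξ.2 j⟩

/-- `y` is obtained from `x` by switching (or not) the lamp at the current
position of the lamplighter and then moving one step ("switch then walk"). -/
def lampRel (x y : LV) : Prop :=
  (y.1 = x.1 + 1 ∨ y.1 = x.1 - 1) ∧ ∀ i, i ≠ x.1 → y.2.1 i = x.2.1 i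

/-- The lamplighter graph. -/
def lampGraph : SimpleGraph LV where
  Adj x y := lampRel x y ∨ lampRel y x
  symm := by constructor; intro x y h; tauto
  loopless := by
    constructor
    intro x h
    rcases h with ⟨h1, -⟩ | ⟨h1, -⟩ <;> rcases h1 with h | h <;> omega

/-- Graph distance on the lamplighter graph. -/
noncomputable def lampDist (x y : LV) : ℕ := lampGraph.dist x y

/-- Closed ball of integer radius. -/
noncomputable def lampBall (x : LV) (R : ℕ) : Set LV := {y | lampDist x y ≤ R}

/-- Closed ball of real radius. -/
noncomputable def lampRBall (x : LV) (ρ : ℝ) : Set LV :=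
  {y | (lampDist x y : ℝ) ≤ ρ}

/-- A set together with its exterior boundary. -/
def lampCl (A : Set LV) : Set LV :=
  A ∪ {y | y ∉ A ∧ ∃ x ∈ A, lampGraph.Adj x y}

/-- The configuration with all lamps off. -/
def lampZero : Conf := ⟨0, by intro i; simp⟩

/-- The base point: lamplighter at the origin, all lamps off. -/
def lampBase : LV := ((0 : ℤ), lampZero)

/-- The configuration `1_{[a,b]}`. -/
noncomputable def lampIcc (a b : ℤ) : Conf :=
  ⟨Finsupp.indicator (Finset.Icc a b) (fun _ _ => 1), by
    intro i
    classical
    by_cases h : i ∈ Finset.Icc a b <;> simp [Finsupp.indicator_apply, h]⟩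

/-- `h` is harmonic at `x` for the simple random walk on the lamplighter
graph: `h(x)` is the average of `h` over the four neighbours of `x`. -/
def harmAt (h : LV → ℝ) (x : LV) : Prop :=
  4 * h x =
    h (x.1 + 1, confSet x.2 x.1 0 (by norm_num)) +
    h (x.1 + 1, confSet x.2 x.1 1 le_rfl) +
    h (x.1 - 1, confSet x.2 x.1 0 (by norm_num)) +
    h (x.1 - 1, confSet x.2 x.1 1 le_rfl)


/-- The four (equally likely) successors of a state of the discrete-time
simple random walk on the lamplighter graph. -/
noncomputable def lampSuccs (x : LV) : List LV :=
  [(x.1 + 1, confSet x.2 x.1 0 (by norm_num)),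
   (x.1 + 1, confSet x.2 x.1 1 le_rfl),
   (x.1 - 1, confSet x.2 x.1 0 (by norm_num)),
   (x.1 - 1, confSet x.2 x.1 1 le_rfl)]

/-- One step of the walk. -/
noncomputable def lampStep (x y : LV) : Prop := y ∈ lampSuccs x

/-- The probability of a finite trajectory: each of the four successors is
chosen with probability `1/4`, and the four successors of a state are
pairwise distinct. -/
noncomputable def lampTrajWeight (l : List LV) : ℝ := (1 / 4 : ℝ) ^ (l.length - 1)

/-- `l` is a trajectory of the walk starting at `y`, staying in `B` until its
final state, which is the first state outside `B` and lies in `S`. -/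
noncomputable def lampIsExitPath (B S : Set LV) (y : LV) (l : List LV) : Prop :=
  l.head? = some y ∧ l.Chain' lampStep ∧ (∀ v ∈ l.dropLast, v ∈ B) ∧
    ∃ z, l.getLast? = some z ∧ z ∉ B ∧ z ∈ S

/-- `P^y(X_τ ∈ S)` where `τ` is the exit time of `B`: the total probability of
all trajectories from `y` exiting `B` through a state in `S`. -/
noncomputable def lampExitProb (B S : Set LV) (y : LV) : ℝ :=
  ∑' l : {l : List LV // lampIsExitPath B S y l}, lampTrajWeight l.1


namespace LampEst

lemma confSet_apply_self (ξ : Conf) (i : ℤ) (k : ℕ) (hk : k ≤ 1) :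
    (confSet ξ i k hk).1 i = k := by
  simp [confSet, Finsupp.coe_update]

lemma confSet_apply_ne (ξ : Conf) (i : ℤ) (k : ℕ) (hk : k ≤ 1) {j : ℤ} (h : j ≠ i) :
    (confSet ξ i k hk).1 j = ξ.1 j := by
  simp [confSet, Finsupp.coe_update, Function.update, h]

noncomputable def nxt (x : LV) (c : Bool × Bool) : LV :=
  (if c.1 then x.1 + 1 else x.1 - 1,
    confSet x.2 x.1 (if c.2 then 1 else 0) (by split <;> norm_num))

lemma nxt_fst (x : LV) (c : Bool × Bool) :
    (nxt x c).1 = x.1 + (if c.1 then 1 else -1) := by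
  rcases c with ⟨a, b⟩; cases a <;> simp [nxt] <;> ring

lemma nxt_lamp_self (x : LV) (c : Bool × Bool) :
    (nxt x c).2.1 x.1 = if c.2 then 1 else 0 := by
  simp [nxt, confSet_apply_self]

lemma nxt_lamp_ne (x : LV) (c : Bool × Bool) {j : ℤ} (h : j ≠ x.1) :
    (nxt x c).2.1 j = x.2.1 j := by
  simp [nxt, confSet_apply_ne _ _ _ _ h]

lemma lampStep_nxt (x : LV) (c : Bool × Bool) : lampStep x (nxt x c) := by
  rcases c with ⟨a, b⟩
  cases a <;> cases b <;> simp [nxt, lampStep, lampSuccs]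
  · exact .tail _ (.tail _ (.head _))
  · exact .tail _ (.tail _ (.tail _ (.head _)))
  · exact .head _
  · exact .tail _ (.head _)

lemma adj_nxt (x : LV) (c : Bool × Bool) : lampGraph.Adj x (nxt x c) := by
  left
  constructor
  · rw [nxt_fst]; split <;> omega
  · intro i hi; exact nxt_lamp_ne x c hi

lemma step_eq_nxt {x y : LV} (h : lampStep x y) :
    y = nxt x (decide (y.1 = x.1 + 1), decide (y.2.1 x.1 = 1)) := by
  have hne : x.1 - 1 ≠ x.1 + 1 := by omega
  simp only [lampStep, lampSuccs, List.mem_cons, List.not_mem_nil, or_false] at h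
  rcases List.mem_cons.mp h with h | h
  rotate_left; rcases List.mem_cons.mp h with h | h
  rotate_left; rcases List.mem_cons.mp h with h | h
  rotate_left; rcases List.mem_cons.mp h with h | h
  rotate_left
  · simp at h
  all_goals subst h; simp [nxt, confSet_apply_self, hne]
  all_goals rfl

/-! ### Trajectories driven by coin sequences -/

noncomputable def traj (y : LV) (ω : ℕ → Bool × Bool) : ℕ → LV
  | 0 => y
  | t + 1 => nxt (traj y ω t) (ω t)

def posd (r : ℤ) (d : ℕ → Bool) : ℕ → ℤ
  | 0 => r
  | t + 1 => posd r d t + (if d t then 1 else -1)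

lemma traj_congr (y : LV) (ω ω' : ℕ → Bool × Bool) :
    ∀ t, (∀ t' < t, ω t' = ω' t') → traj y ω t = traj y ω' t := by
  intro t
  induction t with
  | zero => intro _; rfl
  | succ t ih =>
    intro h
    show nxt (traj y ω t) (ω t) = nxt (traj y ω' t) (ω' t)
    rw [ih (fun t' ht' => h t' (by omega)), h t (by omega)]

lemma traj_fst (y : LV) (ω : ℕ → Bool × Bool) :
    ∀ t, (traj y ω t).1 = posd y.1 (fun k => (ω k).1) t := by
  intro t
  induction t with
  | zero => rfl
  | succ t ih =>
    show (nxt (traj y ω t) (ω t)).1 = _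
    rw [nxt_fst, ih]; rfl

lemma reachable_traj (y : LV) (ω : ℕ → Bool × Bool) :
    ∀ t, lampGraph.Reachable y (traj y ω t) := by
  intro t
  induction t with
  | zero => exact SimpleGraph.Reachable.refl y
  | succ t ih => exact ih.trans (adj_nxt (traj y ω t) (ω t)).reachable

lemma traj_lamp_const (y : LV) (ω : ℕ → Bool × Bool) (s : ℤ) (t : ℕ) :
    ∀ T, t ≤ T → (∀ t', t ≤ t' → t' < T → (traj y ω t').1 ≠ s) →
      (traj y ω T).2.1 s = (traj y ω t).2.1 s := by
  intro T
  induction T with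
  | zero => intro h _; simp_all
  | succ T ih =>
    intro hT h
    rcases Nat.eq_or_lt_of_le hT with rfl | hlt
    · rfl
    · have hT' : t ≤ T := by omega
      have hs : s ≠ (traj y ω T).1 := fun hs => h T hT' (by omega) hs.symm
      show (nxt (traj y ω T) (ω T)).2.1 s = _
      rw [nxt_lamp_ne _ _ hs, ih hT' (fun t' h1 h2 => h t' h1 (by omega))]

lemma exists_visit (y : LV) (ω : ℕ → Bool × Bool) (s : ℤ) (T : ℕ)
    (h : (traj y ω T).2.1 s ≠ y.2.1 s) : ∃ t < T, (traj y ω t).1 = s := by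
  by_contra hc
  push_neg at hc
  exact h (traj_lamp_const y ω s 0 T (Nat.zero_le T)
    (fun t' _ h2 => hc t' h2))

lemma traj_lamp_toggle (y : LV) (ω : ℕ → Bool × Bool) {s : ℤ} {t : ℕ}
    (h : (traj y ω t).1 = s) :
    (traj y ω (t + 1)).2.1 s = if (ω t).2 then 1 else 0 := by
  show (nxt (traj y ω t) (ω t)).2.1 s = _
  rw [← h, nxt_lamp_self]

lemma ivt (r : ℤ) (d : ℕ → Bool) (m : ℤ) (h0 : r ≤ m) :
    ∀ t, m ≤ posd r d t → ∃ s ≤ t, posd r d s = m := by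
  intro t
  induction t with
  | zero => intro h; exact ⟨0, le_rfl, le_antisymm h0 h⟩
  | succ t ih =>
    intro h
    by_cases h' : m ≤ posd r d t
    · obtain ⟨s, hs, hs'⟩ := ih h'
      exact ⟨s, by omega, hs'⟩
    · refine ⟨t + 1, le_rfl, ?_⟩
      have := posd r d (t+1)
      show posd r d (t+1) = m
      have heq : posd r d (t+1) = posd r d t + (if d t then 1 else -1) := rfl
      split at heq <;> omega

end LampEst
namespace LampEst

lemma adj_pos_cases {x y : LV} (h : lampGraph.Adj x y) :
    y.1 = x.1 + 1 ∨ y.1 = x.1 - 1 := by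
  rcases h with ⟨h1, -⟩ | ⟨h1, -⟩ <;> omega

lemma adj_lamp_cases {x y : LV} (h : lampGraph.Adj x y) {s : ℤ}
    (hs : y.2.1 s ≠ x.2.1 s) : s = x.1 ∨ s = y.1 := by
  rcases h with ⟨-, h2⟩ | ⟨-, h2⟩
  · by_contra hc
    push_neg at hc
    exact hs (h2 s hc.1)
  · by_contra hc
    push_neg at hc
    exact hs (h2 s hc.2).symm

lemma walk_pos {u v : LV} (W : lampGraph.Walk u v) :
    |v.1 - u.1| ≤ (W.length : ℤ) := by
  induction W with
  | nil => simp
  | @cons a b c hab p ih =>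
    have h1 := adj_pos_cases hab
    rw [SimpleGraph.Walk.length_cons]
    push_cast
    rw [abs_le] at *
    omega

lemma walk_visit {u v : LV} (W : lampGraph.Walk u v) :
    ∀ {s : ℤ}, v.2.1 s ≠ u.2.1 s → ∃ z ∈ W.support, z.1 = s := by
  induction W with
  | nil => intro s h; exact absurd rfl h
  | @cons a b c hab p ih =>
    intro s h
    by_cases hb : c.2.1 s = b.2.1 s
    · have hba : b.2.1 s ≠ a.2.1 s := by rw [← hb]; exact h
      rcases adj_lamp_cases hab hba with h' | h'
      · exact ⟨a, by simp [SimpleGraph.Walk.support_cons], h'.symm⟩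
      · exact ⟨b, by simp [SimpleGraph.Walk.support_cons], h'.symm⟩
    · obtain ⟨z, hz, hz'⟩ := ih hb
      exact ⟨z, by simp [SimpleGraph.Walk.support_cons, hz], hz'⟩

lemma lampBase_lamp (s : ℤ) : lampBase.2.1 s = 0 := rfl

lemma dist_lower {v : LV} (h : lampGraph.Reachable lampBase v) {j : ℤ}
    (hj : v.2.1 j ≠ 0) :
    v.1 - 2 * j ≤ (lampDist lampBase v : ℤ) := by
  classical
  obtain ⟨W, hW⟩ := h.exists_walk_length_eq_dist
  have hlamp : v.2.1 j ≠ lampBase.2.1 j := by rw [lampBase_lamp]; exact hj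
  obtain ⟨z, hz, hzj⟩ := walk_visit W hlamp
  have h1 : |z.1 - lampBase.1| ≤ ((W.takeUntil z hz).length : ℤ) :=
    walk_pos (W.takeUntil z hz)
  have h2 : |v.1 - z.1| ≤ ((W.dropUntil z hz).length : ℤ) :=
    walk_pos (W.dropUntil z hz)
  have h3 : (W.takeUntil z hz).length + (W.dropUntil z hz).length = W.length := by
    rw [← SimpleGraph.Walk.length_append, SimpleGraph.Walk.take_spec]
  have hbase : lampBase.1 = 0 := rfl
  rw [hbase, hzj] at h1
  rw [hzj] at h2
  rw [lampDist, ← hW]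
  rw [abs_le] at h1 h2
  omega

/-! ### Reaching the starting state -/

lemma lampIcc_apply (a b i : ℤ) :
    (lampIcc a b).1 i = if a ≤ i ∧ i ≤ b then 1 else 0 := by
  classical
  simp [lampIcc, Finsupp.indicator_apply, Finset.mem_Icc]

lemma lampIcc_ext {a b a' b' : ℤ} (h : ∀ i : ℤ, (a ≤ i ∧ i ≤ b) ↔ (a' ≤ i ∧ i ≤ b')) :
    lampIcc a b = lampIcc a' b' := by
  apply Subtype.ext
  apply Finsupp.ext
  intro i
  show (lampIcc a b).1 i = (lampIcc a' b').1 i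
  rw [lampIcc_apply, lampIcc_apply, if_congr (h i) rfl rfl]

lemma reach_aux : ∀ k : ℕ,
    lampGraph.Reachable lampBase ((-(k : ℤ), lampIcc (-(k : ℤ) + 1) 0) : LV) := by
  intro k
  induction k with
  | zero =>
    have h0 : ((-((0 : ℕ) : ℤ), lampIcc (-((0 : ℕ) : ℤ) + 1) 0) : LV) = lampBase := by
      have h1 : (-((0 : ℕ) : ℤ)) = (0 : ℤ) := by norm_num
      have h2 : lampIcc (-((0 : ℕ) : ℤ) + 1) 0 = lampZero := by
        have : lampIcc (-((0 : ℕ) : ℤ) + 1) 0 = lampIcc 1 0 := by norm_num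
        rw [this]
        apply Subtype.ext
        apply Finsupp.ext
        intro i
        show (lampIcc 1 0).1 i = lampZero.1 i
        rw [lampIcc_apply]
        have hn : ¬ ((1 : ℤ) ≤ i ∧ i ≤ 0) := by omega
        rw [if_neg hn]
        rfl
      rw [h2, h1]
      rfl
    rw [h0]
  | succ k ih =>
    refine ih.trans (SimpleGraph.Adj.reachable ?_)
    left
    constructor
    · show -(((k : ℕ) + 1 : ℕ) : ℤ) = -(k : ℤ) + 1 ∨ -(((k : ℕ) + 1 : ℕ) : ℤ) = -(k : ℤ) - 1
      push_cast
      omega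
    · intro i hi
      show (lampIcc (-(((k : ℕ) + 1 : ℕ) : ℤ) + 1) 0).1 i = (lampIcc (-(k : ℤ) + 1) 0).1 i
      rw [lampIcc_apply, lampIcc_apply]
      have hi' : i ≠ -(k : ℤ) := hi
      have hcast : (-(((k : ℕ) + 1 : ℕ) : ℤ) + 1 ≤ i ∧ i ≤ 0) ↔ (-(k : ℤ) + 1 ≤ i ∧ i ≤ 0) := by
        push_cast
        omega
      rw [if_congr hcast rfl rfl]

lemma reach_start (R : ℕ) :
    lampGraph.Reachable lampBase ((-(R : ℤ), lampIcc (-(R : ℤ)) 0) : LV) := by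
  refine (reach_aux R).trans ?_
  have step1 : lampGraph.Adj ((-(R : ℤ), lampIcc (-(R : ℤ) + 1) 0) : LV)
      ((-(R : ℤ) + 1, lampIcc (-(R : ℤ)) 0) : LV) := by
    left
    refine ⟨Or.inl rfl, ?_⟩
    intro i hi
    show (lampIcc (-(R : ℤ)) 0).1 i = (lampIcc (-(R : ℤ) + 1) 0).1 i
    rw [lampIcc_apply, lampIcc_apply]
    have hi' : i ≠ -(R : ℤ) := hi
    have hiff : (-(R : ℤ) ≤ i ∧ i ≤ 0) ↔ (-(R : ℤ) + 1 ≤ i ∧ i ≤ 0) := by omega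
    rw [if_congr hiff rfl rfl]
  have step2 : lampGraph.Adj ((-(R : ℤ) + 1, lampIcc (-(R : ℤ)) 0) : LV)
      ((-(R : ℤ), lampIcc (-(R : ℤ)) 0) : LV) := by
    left
    exact ⟨Or.inr (by ring), fun i _ => rfl⟩
  exact (step1.reachable).trans step2.reachable

end LampEst
namespace LampEst

/-! ### Lists as trajectories -/

noncomputable def stl (l : List LV) (t : ℕ) : LV := l.getD t lampBase

noncomputable def codeOf (l : List LV) (t : ℕ) : Bool × Bool :=
  (decide ((stl l (t + 1)).1 = (stl l t).1 + 1),
   decide ((stl l (t + 1)).2.1 ((stl l t).1) = 1))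

lemma stl_eq_get (l : List LV) (t : ℕ) (h : t < l.length) :
    stl l t = l.get ⟨t, h⟩ := by
  simp [stl, List.getD_eq_getElem?_getD, List.getElem?_eq_getElem h]

lemma chain_stl_traj {l : List LV} {y : LV} (hc : l.Chain' lampStep)
    (hh : l.head? = some y) : ∀ t < l.length, stl l t = traj y (codeOf l) t := by
  intro t
  induction t with
  | zero =>
    intro ht
    cases l with
    | nil => simp at hh
    | cons a l' =>
      simp only [List.head?_cons, Option.some.injEq] at hh
      subst hh
      rfl
  | succ t ih =>
    intro ht
    have ht' : t < l.length := by omega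
    have hstep : lampStep (stl l t) (stl l (t + 1)) := by
      rw [stl_eq_get l t ht', stl_eq_get l (t+1) ht]
      exact List.isChain_iff_getElem.mp hc t (by omega)
    have key : stl l (t + 1) = nxt (stl l t) (codeOf l t) := step_eq_nxt hstep
    show stl l (t + 1) = nxt (traj y (codeOf l) t) (codeOf l t)
    rw [key, ih ht']

lemma stl_head {l : List LV} {y : LV} (hh : l.head? = some y) : stl l 0 = y := by
  cases l with
  | nil => simp at hh
  | cons a l' =>
    simp only [List.head?_cons, Option.some.injEq] at hh
    subst hh; rfl

lemma stl_last {l : List LV} {z : LV} (hz : l.getLast? = some z) :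
    stl l (l.length - 1) = z := by
  have hne : l ≠ [] := by rintro rfl; simp at hz
  rw [List.getLast?_eq_getElem?] at hz
  have hlen : l.length - 1 < l.length := by
    cases l with | nil => simp at hne | cons a l' => simp
  rw [List.getElem?_eq_getElem hlen] at hz
  simp only [Option.some.injEq] at hz
  rw [stl_eq_get l _ hlen, ← hz]
  rfl

lemma stl_mem_dropLast {l : List LV} {t : ℕ} (ht : t < l.length - 1) :
    stl l t ∈ l.dropLast := by
  have h1 : t < l.dropLast.length := by
    rw [List.length_dropLast]; exact ht
  have h2 : l.dropLast[t] = l[t] := List.getElem_dropLast h1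
  have h3 : stl l t = l.dropLast[t] := by
    rw [stl_eq_get l t (by omega), h2]; rfl
  rw [h3]
  exact List.getElem_mem h1

/-! ### Counting functions with forced values -/

lemma card_forced {α β : Type*} [Fintype α] [DecidableEq α] [Fintype β] [DecidableEq β]
    (S : Finset α) (g : α → β) :
    (Finset.univ.filter (fun f : α → β => ∀ a ∈ S, f a = g a)).card
      = Fintype.card β ^ (Sᶜ.card) := by
  classical
  rw [← Fintype.card_subtype]
  have e : {f : α → β // ∀ a ∈ S, f a = g a} ≃ ((Sᶜ : Finset α) → β) := by
    refine ⟨fun f a => f.1 a.1, fun h => ⟨fun a => if ha : a ∈ S then g a else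
      h ⟨a, Finset.mem_compl.mpr ha⟩, fun a ha => by simp [ha]⟩, ?_, ?_⟩
    · intro f
      apply Subtype.ext
      funext a
      by_cases ha : a ∈ S
      · simp [ha, f.2 a ha]
      · simp [ha]
    · intro h
      funext a
      have ha : a.1 ∉ S := Finset.mem_compl.mp a.2
      simp [ha]
  rw [Fintype.card_congr e, Fintype.card_fun, Fintype.card_coe]

end LampEst
namespace LampEst

/-! ### First hitting time of `m` and last visit to `j` before it -/

noncomputable def myT (m r : ℤ) (K : ℕ) (d : ℕ → Bool) : ℕ :=
  Nat.find (p := fun t => t = K ∨ posd r d t = m) ⟨K, Or.inl rfl⟩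

noncomputable def tjf (m r : ℤ) (K : ℕ) (d : ℕ → Bool) (j : ℤ) : ℕ :=
  Nat.findGreatest (fun t => posd r d t = j) (myT m r K d)

lemma myT_le {m r : ℤ} {K : ℕ} {d : ℕ → Bool} {T' : ℕ} (h2 : posd r d T' = m) :
    myT m r K d ≤ T' :=
  Nat.find_min' _ (Or.inr h2)

lemma myT_spec {m r : ℤ} {K : ℕ} {d : ℕ → Bool} {T' : ℕ} (h1 : T' < K)
    (h2 : posd r d T' = m) :
    posd r d (myT m r K d) = m ∧ ∀ t < myT m r K d, posd r d t ≠ m := by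
  have hle : myT m r K d ≤ T' := myT_le h2
  have hspec := Nat.find_spec (p := fun t => t = K ∨ posd r d t = m)
    (⟨K, Or.inl rfl⟩ : ∃ t, t = K ∨ posd r d t = m)
  rcases hspec with h | h
  · have h' : myT m r K d = K := h
    omega
  · refine ⟨h, fun t ht => ?_⟩
    have := Nat.find_min (p := fun t => t = K ∨ posd r d t = m)
      (⟨K, Or.inl rfl⟩ : ∃ t, t = K ∨ posd r d t = m) ht
    tauto

/-- The direction-sequence event: the walk hits `m` before time `K`, and for
every `j ∈ J` the last visit to `j` before that happens exists. -/
def BadD (m r : ℤ) (J : Finset ℤ) (K : ℕ) (d : ℕ → Bool) : Prop :=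
  myT m r K d < K ∧ posd r d (myT m r K d) = m ∧
    ∀ j ∈ J, tjf m r K d j < myT m r K d ∧ posd r d (tjf m r K d j) = j

end LampEst
namespace LampEst

def dex (K : ℕ) (ω : Fin K → Bool × Bool) : ℕ → Bool :=
  fun t => if h : t < K then (ω ⟨t, h⟩).1 else false

def eex (K : ℕ) (ω : Fin K → Bool × Bool) : ℕ → Bool :=
  fun t => if h : t < K then (ω ⟨t, h⟩).2 else false

def wext (K : ℕ) (ω : Fin K → Bool × Bool) : ℕ → Bool × Bool :=
  fun t => (dex K ω t, eex K ω t)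

lemma wext_lt {Kn : ℕ} (ω : Fin Kn → Bool × Bool) {t : ℕ} (h : t < Kn) :
    wext Kn ω t = ω ⟨t, h⟩ := by
  show (dex Kn ω t, eex Kn ω t) = ω ⟨t, h⟩
  rw [dex, eex]
  simp only [dif_pos h]

lemma eex_lt {Kn : ℕ} (ω : Fin Kn → Bool × Bool) {t : ℕ} (h : t < Kn) :
    eex Kn ω t = (ω ⟨t, h⟩).2 := by
  rw [eex]; simp only [dif_pos h]

def BadF (m r : ℤ) (J : Finset ℤ) (K : ℕ) (ω : Fin K → Bool × Bool) : Prop :=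
  BadD m r J K (dex K ω) ∧ ∀ j ∈ J, eex K ω (tjf m r K (dex K ω) j) = false

lemma card_forced_le {α β : Type*} [Fintype α] [DecidableEq α] [Fintype β] [DecidableEq β]
    (S : Finset α) (g : α → β) (E : Finset (α → β))
    (hE : ∀ f ∈ E, ∀ a ∈ S, f a = g a) :
    E.card ≤ Fintype.card β ^ (Sᶜ.card) := by
  rw [← card_forced S g]
  apply Finset.card_le_card
  intro f hf
  exact Finset.mem_filter.mpr ⟨Finset.mem_univ _, hE f hf⟩

/-- Counting the extensions of a fixed code prefix. -/
lemma card_ext (Kn n1 : ℕ) (hn1 : n1 ≤ Kn) (g : ℕ → Bool × Bool) :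
    ((Finset.univ : Finset (Fin Kn → Bool × Bool)).filter
      (fun ω => ∀ t < n1, wext Kn ω t = g t)).card = 4 ^ (Kn - n1) := by
  classical
  set S : Finset (Fin Kn) :=
    (Finset.range n1).attachFin (fun m hm => lt_of_lt_of_le (Finset.mem_range.mp hm) hn1)
    with hSdef
  have hmemS : ∀ a : Fin Kn, a ∈ S ↔ a.1 < n1 := by
    intro a; rw [hSdef, Finset.mem_attachFin, Finset.mem_range]
  have hset : (Finset.univ : Finset (Fin Kn → Bool × Bool)).filter
      (fun ω => ∀ t < n1, wext Kn ω t = g t)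
      = (Finset.univ : Finset (Fin Kn → Bool × Bool)).filter
        (fun ω => ∀ a ∈ S, ω a = g a.1) := by
    apply Finset.filter_congr
    intro ω _
    constructor
    · intro h a ha
      have h1 : a.1 < n1 := (hmemS a).mp ha
      have := h a.1 h1
      rwa [wext_lt ω a.isLt, Fin.eta] at this
    · intro h t ht
      have htK : t < Kn := lt_of_lt_of_le ht hn1
      rw [wext_lt ω htK]
      exact h ⟨t, htK⟩ ((hmemS _).mpr ht)
  rw [hset]
  have hScard : S.card = n1 := by rw [hSdef, Finset.card_attachFin, Finset.card_range]
  have hcf := card_forced S (fun a : Fin Kn => g a.1)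
  rw [Finset.card_compl, hScard, Fintype.card_fin] at hcf
  have h4 : Fintype.card (Bool × Bool) = 4 := by simp
  rw [h4] at hcf
  convert hcf using 2
  ext ω
  simp only [Finset.mem_filter]

end LampEst
namespace LampEst

lemma badf_cardJ {m r : ℤ} {J : Finset ℤ} {Kn : ℕ} {ω : Fin Kn → Bool × Bool}
    (h : BadF m r J Kn ω) : J.card ≤ Kn := by
  classical
  obtain ⟨⟨hTK, hTm, hj⟩, -⟩ := h
  set d := dex Kn ω
  have hinj : Set.InjOn (fun j => tjf m r Kn d j) J := by
    intro a ha b hb hab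
    have h1 := (hj a ha).2
    have h2 := (hj b hb).2
    simp only at hab
    rw [← h1, ← h2, hab]
  calc J.card = (J.image (fun j => tjf m r Kn d j)).card :=
        (Finset.card_image_of_injOn hinj).symm
    _ ≤ (Finset.range Kn).card := by
        apply Finset.card_le_card
        intro t ht
        obtain ⟨j, hjJ, rfl⟩ := Finset.mem_image.mp ht
        rw [Finset.mem_range]
        exact lt_trans (hj j hjJ).1 hTK
    _ = Kn := Finset.card_range Kn

lemma card_bad (m r : ℤ) (J : Finset ℤ) (Kn : ℕ) (hKn : 0 < Kn)
    [DecidablePred (BadF m r J Kn)] :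
    ((Finset.univ : Finset (Fin Kn → Bool × Bool)).filter (BadF m r J Kn)).card
      ≤ 2 ^ Kn * 2 ^ (Kn - J.card) := by
  classical
  -- map into pairs of functions
  set q : (Fin Kn → Bool × Bool) → (Fin Kn → Bool) × (Fin Kn → Bool) :=
    fun ω => (fun t => (ω t).1, fun t => (ω t).2) with hq
  have hq_inj : Function.Injective q := by
    intro ω ω' h
    funext t
    rw [hq] at h
    simp only [Prod.mk.injEq] at h
    have h1 := congrFun h.1 t
    have h2 := congrFun h.2 t
    exact Prod.ext h1 h2
  rw [← Finset.card_image_of_injective _ hq_inj]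
  -- the image is contained in a product-structured set
  set dB : (Fin Kn → Bool) → ℕ → Bool :=
    fun d t => if h : t < Kn then d ⟨t, h⟩ else false with hdB
  set Q : (Fin Kn → Bool) × (Fin Kn → Bool) → Prop :=
    fun p => BadD m r J Kn (dB p.1) ∧
      ∀ j ∈ J, ∀ h : tjf m r Kn (dB p.1) j < Kn, p.2 ⟨tjf m r Kn (dB p.1) j, h⟩ = false
    with hQ
  have hdex : ∀ ω : Fin Kn → Bool × Bool, dex Kn ω = dB (q ω).1 := by
    intro ω; funext t; rw [hdB, dex]
  have hsub : (Finset.univ.filter (BadF m r J Kn)).image q ⊆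
      Finset.univ.filter Q := by
    intro p hp
    obtain ⟨ω, hω, rfl⟩ := Finset.mem_image.mp hp
    have hbad : BadF m r J Kn ω := (Finset.mem_filter.mp hω).2
    rw [Finset.mem_filter]
    refine ⟨Finset.mem_univ _, ?_, ?_⟩
    · rw [← hdex]; exact hbad.1
    · intro j hj h
      have := hbad.2 j hj
      rw [hdex] at this
      rw [eex_lt ω h] at this
      exact this
  refine le_trans (Finset.card_le_card hsub) ?_
  -- count the product-structured set
  have hcount : ∀ d : Fin Kn → Bool,
      ((Finset.univ : Finset (Fin Kn → Bool)).filter (fun e => Q (d, e))).card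
        ≤ 2 ^ (Kn - J.card) := by
    intro d
    by_cases hbd : BadD m r J Kn (dB d)
    · -- the values at the last-visit times are forced
      set SJ : Finset (Fin Kn) := J.attach.image
        (fun j => (⟨tjf m r Kn (dB d) j.1, lt_trans (hbd.2.2 j.1 j.2).1 hbd.1⟩ : Fin Kn))
        with hSJ
      have hSJcard : SJ.card = J.card := by
        rw [hSJ]
        rw [Finset.card_image_of_injOn, Finset.card_attach]
        intro a _ b _ hab
        have hval : tjf m r Kn (dB d) a.1 = tjf m r Kn (dB d) b.1 := by
          have := congrArg Fin.val hab
          simpa using this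
        apply Subtype.ext
        rw [← (hbd.2.2 a.1 a.2).2, ← (hbd.2.2 b.1 b.2).2, hval]
      refine le_trans (card_forced_le SJ (fun _ : Fin Kn => false) _ ?_) (le_of_eq ?_)
      · intro e he a ha
        have hQe : Q (d, e) := (Finset.mem_filter.mp he).2
        rw [hSJ] at ha
        obtain ⟨j, -, rfl⟩ := Finset.mem_image.mp ha
        exact hQe.2 j.1 j.2 _
      · rw [Finset.card_compl, hSJcard, Fintype.card_fin, Fintype.card_bool]
    · have : (Finset.univ : Finset (Fin Kn → Bool)).filter (fun e => Q (d, e)) = ∅ := by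
        apply Finset.filter_false_of_mem
        intro e _
        rw [hQ]
        intro hQe
        exact hbd hQe.1
      rw [this]
      simp
  -- sum over the first component
  have hprod : (Finset.univ.filter Q).card
      = ∑ d : Fin Kn → Bool,
        ((Finset.univ : Finset (Fin Kn → Bool)).filter (fun e => Q (d, e))).card := by
    rw [Finset.card_filter]
    rw [← Finset.univ_product_univ, Finset.sum_product]
    congr 1
    funext d
    rw [Finset.card_filter]
  rw [hprod]
  calc ∑ d : Fin Kn → Bool, ((Finset.univ : Finset (Fin Kn → Bool)).filter
        (fun e => Q (d, e))).card
      ≤ ∑ _d : Fin Kn → Bool, 2 ^ (Kn - J.card) :=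
        Finset.sum_le_sum (fun d _ => hcount d)
    _ = 2 ^ Kn * 2 ^ (Kn - J.card) := by
        rw [Finset.sum_const, Finset.card_univ, Fintype.card_fun, Fintype.card_bool,
          Fintype.card_fin, smul_eq_mul]

end LampEst
namespace LampEst

lemma exit_unique {B S : Set LV} {y : LV} (Kn : ℕ) {l l' : List LV}
    (hl : lampIsExitPath B S y l) (hl' : lampIsExitPath B S y l')
    (hle : l.length ≤ l'.length)
    (ω : Fin Kn → Bool × Bool)
    (hag : ∀ t < l.length - 1, wext Kn ω t = codeOf l t)
    (hag' : ∀ t < l'.length - 1, wext Kn ω t = codeOf l' t) : l = l' := by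
  obtain ⟨hh, hc, hB, z, hzl, hzB, -⟩ := hl
  obtain ⟨hh', hc', hB', z', hzl', hzB', -⟩ := hl'
  have hne : l ≠ [] := by intro h; rw [h] at hh; simp at hh
  have hn1 : 1 ≤ l.length := List.length_pos_iff.mpr hne
  have hstl : ∀ t < l.length, stl l t = traj y (wext Kn ω) t := by
    intro t ht
    rw [chain_stl_traj hc hh t ht]
    exact traj_congr y _ _ t (fun t' ht' => (hag t' (by omega)).symm)
  have hstl' : ∀ t < l'.length, stl l' t = traj y (wext Kn ω) t := by
    intro t ht
    rw [chain_stl_traj hc' hh' t ht]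
    exact traj_congr y _ _ t (fun t' ht' => (hag' t' (by omega)).symm)
  rcases eq_or_lt_of_le hle with heq | hlt
  · apply List.ext_getElem heq
    intro i h1 h2
    have e1 : stl l i = l[i] := by rw [stl_eq_get l i h1]; rfl
    have e2 : stl l' i = l'[i] := by rw [stl_eq_get l' i h2]; rfl
    rw [← e1, ← e2, hstl i h1, hstl' i h2]
  · exfalso
    have h1 : stl l (l.length - 1) = z := stl_last hzl
    have h2 : stl l (l.length - 1) = stl l' (l.length - 1) := by
      rw [hstl _ (by omega), hstl' _ (by omega)]
    have h3 : stl l' (l.length - 1) ∈ l'.dropLast := stl_mem_dropLast (by omega)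
    exact hzB (h1 ▸ (h2 ▸ hB' _ h3))

theorem exit_bad (K : ℝ) (hK1 : 1 < K) (hK3 : K < 3) (R : ℕ) (hR : 1 ≤ R)
    (Kn : ℕ) (l : List LV)
    (hl : lampIsExitPath (lampRBall lampBase (K * R))
      {x : LV | ∃ i : ℤ, (1 - (3 - K) / 3) * R ≤ (i : ℝ) ∧ (i : ℝ) ≤ R ∧ x.2.1 i ≠ 0}
      ((-(R : ℤ)), lampIcc (-(R : ℤ)) 0) l)
    (hn : l.length ≤ Kn)
    (ω : Fin Kn → Bool × Bool)
    (hag : ∀ t < l.length - 1, wext Kn ω t = codeOf l t) :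
    BadF ⌈(1 - (3 - K) / 3) * (R : ℝ)⌉ (-(R : ℤ))
      (Finset.Icc (-(R : ℤ)) (-(⌊(1 - (3 - K) / 3) * (R : ℝ)⌋ + 1))) Kn ω := by
  have hRpos : (1 : ℝ) ≤ (R : ℝ) := by exact_mod_cast hR
  set lamR : ℝ := (1 - (3 - K) / 3) * (R : ℝ) with hlamR
  have hlam_pos : 0 < lamR := by
    rw [hlamR]
    have : (0:ℝ) < 1 - (3 - K) / 3 := by linarith
    nlinarith
  have hlam3 : 3 * lamR = K * R := by rw [hlamR]; ring
  set m : ℤ := ⌈lamR⌉ with hm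
  set b : ℤ := ⌊lamR⌋ with hb
  set J : Finset ℤ := Finset.Icc (-(R : ℤ)) (-(b + 1)) with hJ
  have hm1 : 1 ≤ m := by
    have : 0 < m := Int.ceil_pos.mpr hlam_pos
    omega
  have hb0 : 0 ≤ b := Int.floor_nonneg.mpr (le_of_lt hlam_pos)
  have hmlam : lamR ≤ (m : ℝ) := Int.le_ceil lamR
  have hblam1 : lamR < (b : ℝ) + 1 := by
    have := Int.lt_floor_add_one lamR
    push_cast at this ⊢
    linarith
  obtain ⟨hhead, hchain, hB, z, hlast, hzB, hzS⟩ := hl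
  set y0 : LV := ((-(R : ℤ)), lampIcc (-(R : ℤ)) 0) with hy0
  set d : ℕ → Bool := dex Kn ω with hd
  have hne : l ≠ [] := by intro h; rw [h] at hhead; simp at hhead
  have hn1 : 1 ≤ l.length := List.length_pos_iff.mpr hne
  have hstl : ∀ t < l.length, stl l t = traj y0 (wext Kn ω) t := by
    intro t ht
    rw [chain_stl_traj hchain hhead t ht]
    exact traj_congr y0 _ _ t (fun t' ht' => (hag t' (by omega)).symm)
  have hpos : ∀ t, (traj y0 (wext Kn ω) t).1 = posd (-(R : ℤ)) d t := by
    intro t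
    exact traj_fst y0 (wext Kn ω) t
  obtain ⟨i, hi1, hi2, hi3⟩ := hzS
  have hmi : m ≤ i := Int.ceil_le.mpr hi1
  have hz_stl : stl l (l.length - 1) = z := stl_last hlast
  have hy0i : y0.2.1 i = 0 := by
    show (lampIcc (-(R : ℤ)) 0).1 i = 0
    rw [lampIcc_apply, if_neg]
    omega
  have hchange : (traj y0 (wext Kn ω) (l.length - 1)).2.1 i ≠ y0.2.1 i := by
    rw [← hstl (l.length - 1) (by omega), hz_stl, hy0i]
    exact hi3
  obtain ⟨ti, hti, htipos⟩ := exists_visit _ _ _ _ hchange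
  have hposd_ti : posd (-(R : ℤ)) d ti = i := by rw [← hpos ti]; exact htipos
  have hRZ : (0 : ℤ) ≤ (R : ℤ) := Int.natCast_nonneg R
  have hstart : -(R : ℤ) ≤ m := by omega
  have himid : m ≤ posd (-(R : ℤ)) d ti := by rw [hposd_ti]; exact hmi
  obtain ⟨T', hT'le, hT'⟩ := ivt (-(R : ℤ)) d m hstart ti himid
  set T : ℕ := myT m (-(R : ℤ)) Kn d with hT
  have hTle : T ≤ T' := myT_le hT'
  have hT'K : T' < Kn := by omega
  obtain ⟨hTm, hTfirst⟩ := myT_spec hT'K hT'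
  have hTK : T < Kn := by omega
  have hTn : T < l.length - 1 := by omega
  have huB : stl l T ∈ lampRBall lampBase (K * R) := hB _ (stl_mem_dropLast hTn)
  have huT : stl l T = traj y0 (wext Kn ω) T := hstl T (by omega)
  have hposT : (traj y0 (wext Kn ω) T).1 = m := by rw [hpos]; exact hTm
  have hkey : ∀ j ∈ J, tjf m (-(R : ℤ)) Kn d j < T ∧
      posd (-(R : ℤ)) d (tjf m (-(R : ℤ)) Kn d j) = j ∧
      eex Kn ω (tjf m (-(R : ℤ)) Kn d j) = false := by
    intro j hjJ
    obtain ⟨hj1, hj2⟩ := Finset.mem_Icc.mp hjJ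
    have hy0j : y0.2.1 j = 1 := by
      show (lampIcc (-(R : ℤ)) 0).1 j = 1
      rw [lampIcc_apply, if_pos]
      omega
    have hjoff : (traj y0 (wext Kn ω) T).2.1 j = 0 := by
      by_contra hne'
      have hreach : lampGraph.Reachable lampBase (traj y0 (wext Kn ω) T) :=
        (reach_start R).trans (reachable_traj y0 (wext Kn ω) T)
      have hdist := dist_lower hreach hne'
      rw [hposT] at hdist
      have hball : ((lampDist lampBase (traj y0 (wext Kn ω) T) : ℝ)) ≤ K * R := by
        rw [← huT]; exact huB
      have h1 : ((m : ℝ) - 2 * (j : ℝ)) ≤ (lampDist lampBase (traj y0 (wext Kn ω) T) : ℝ) := by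
        exact_mod_cast hdist
      have hjb : (j : ℝ) ≤ -((b : ℝ) + 1) := by exact_mod_cast hj2
      linarith
    have hy0j' : (traj y0 (wext Kn ω) T).2.1 j ≠ y0.2.1 j := by
      rw [hjoff, hy0j]; simp
    obtain ⟨tj, htjT, htjpos⟩ := exists_visit y0 (wext Kn ω) j T hy0j'
    have htjposd : posd (-(R : ℤ)) d tj = j := by rw [← hpos tj]; exact htjpos
    have htjf_def : tjf m (-(R : ℤ)) Kn d j
        = Nat.findGreatest (fun t => posd (-(R : ℤ)) d t = j) T := by
      rw [tjf, hT]
    have htjf_ge : tj ≤ tjf m (-(R : ℤ)) Kn d j := by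
      rw [htjf_def]
      exact Nat.le_findGreatest (le_of_lt htjT) htjposd
    have htjf_le : tjf m (-(R : ℤ)) Kn d j ≤ T := by
      rw [htjf_def]
      exact Nat.findGreatest_le T
    have htjfP : posd (-(R : ℤ)) d (tjf m (-(R : ℤ)) Kn d j) = j := by
      rw [htjf_def]
      exact Nat.findGreatest_spec (P := fun t => posd (-(R : ℤ)) d t = j)
        (le_of_lt htjT) htjposd
    have htjfT : tjf m (-(R : ℤ)) Kn d j < T := by
      rcases eq_or_lt_of_le htjf_le with heq | hlt
      · exfalso
        rw [heq, hTm] at htjfP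
        omega
      · exact hlt
    have htoggle : (traj y0 (wext Kn ω) (tjf m (-(R : ℤ)) Kn d j + 1)).2.1 j
        = if (wext Kn ω (tjf m (-(R : ℤ)) Kn d j)).2 then 1 else 0 := by
      apply traj_lamp_toggle
      rw [hpos]
      exact htjfP
    have hconst : (traj y0 (wext Kn ω) T).2.1 j
        = (traj y0 (wext Kn ω) (tjf m (-(R : ℤ)) Kn d j + 1)).2.1 j := by
      apply traj_lamp_const
      · omega
      · intro t' h1 h2
        rw [hpos]
        have hgt : Nat.findGreatest (fun t => posd (-(R : ℤ)) d t = j) T < t' := by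
          rw [← htjf_def]; omega
        exact Nat.findGreatest_is_greatest hgt (by omega)
    refine ⟨htjfT, htjfP, ?_⟩
    rw [hjoff] at hconst
    rw [htoggle] at hconst
    have : (wext Kn ω (tjf m (-(R : ℤ)) Kn d j)).2 = false := by
      by_contra hbool
      rw [Bool.not_eq_false] at hbool
      rw [hbool] at hconst
      simp at hconst
    exact this
  exact ⟨⟨hTK, hTm, fun j hj => ⟨(hkey j hj).1, (hkey j hj).2.1⟩⟩,
    fun j hj => (hkey j hj).2.2⟩

end LampEst
namespace LampEst

theorem sum_bound (K : ℝ) (hK1 : 1 < K) (hK3 : K < 3) (R : ℕ) (hR : 1 ≤ R)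
    (s : Finset {l : List LV // lampIsExitPath (lampRBall lampBase (K * R))
      {x : LV | ∃ i : ℤ, (1 - (3 - K) / 3) * R ≤ (i : ℝ) ∧ (i : ℝ) ≤ R ∧ x.2.1 i ≠ 0}
      ((-(R : ℤ)), lampIcc (-(R : ℤ)) 0) l}) :
    ∑ l ∈ s, lampTrajWeight l.1 ≤ (2 : ℝ) ^ (-((3 - K) / 3 * R)) := by
  classical
  have hrhs : (0 : ℝ) < (2 : ℝ) ^ (-((3 - K) / 3 * (R : ℝ))) :=
    Real.rpow_pos_of_pos (by norm_num) _
  rcases Finset.eq_empty_or_nonempty s with rfl | hs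
  · simp only [Finset.sum_empty]
    exact le_of_lt hrhs
  set Kn := s.sup (fun l => l.1.length) with hKndef
  obtain ⟨l₀, hl₀⟩ := hs
  have hl₀ne : l₀.1 ≠ [] := by
    have h := l₀.2.1
    intro hemp
    rw [hemp] at h
    simp at h
  have hKn1 : 1 ≤ Kn :=
    le_trans (List.length_pos_iff.mpr hl₀ne) (Finset.le_sup (f := fun l => l.1.length) hl₀)
  have hlen : ∀ l ∈ s, l.1.length ≤ Kn := fun l hl => Finset.le_sup (f := fun l => l.1.length) hl
  set Ext := fun (l : {l : List LV // lampIsExitPath (lampRBall lampBase (K * R))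
      {x : LV | ∃ i : ℤ, (1 - (3 - K) / 3) * R ≤ (i : ℝ) ∧ (i : ℝ) ≤ R ∧ x.2.1 i ≠ 0}
      ((-(R : ℤ)), lampIcc (-(R : ℤ)) 0) l}) =>
    (Finset.univ : Finset (Fin Kn → Bool × Bool)).filter
      (fun ω => ∀ t < l.1.length - 1, wext Kn ω t = codeOf l.1 t) with hExtdef
  have hext_card : ∀ l ∈ s, (Ext l).card = 4 ^ (Kn - (l.1.length - 1)) := by
    intro l hl
    rw [hExtdef]
    exact card_ext Kn (l.1.length - 1) (by have := hlen l hl; omega) (codeOf l.1)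
  have hdisj : ∀ l ∈ s, ∀ l' ∈ s, l ≠ l' → Disjoint (Ext l) (Ext l') := by
    intro l hl l' hl' hne
    rw [Finset.disjoint_left]
    intro ω hω hω'
    apply hne
    rw [hExtdef] at hω hω'
    have h1 := (Finset.mem_filter.mp hω).2
    have h2 := (Finset.mem_filter.mp hω').2
    apply Subtype.ext
    rcases le_total l.1.length l'.1.length with hle | hle
    · exact exit_unique Kn l.2 l'.2 hle ω h1 h2
    · exact (exit_unique Kn l'.2 l.2 hle ω h2 h1).symm
  set F := (Finset.univ : Finset (Fin Kn → Bool × Bool)).filter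
    (BadF ⌈(1 - (3 - K) / 3) * (R : ℝ)⌉ (-(R : ℤ))
      (Finset.Icc (-(R : ℤ)) (-(⌊(1 - (3 - K) / 3) * (R : ℝ)⌋ + 1))) Kn) with hFdef
  have hsubbad : ∀ l ∈ s, Ext l ⊆ F := by
    intro l hl ω hω
    rw [hExtdef] at hω
    rw [hFdef, Finset.mem_filter]
    exact ⟨Finset.mem_univ _,
      exit_bad K hK1 hK3 R hR Kn l.1 l.2 (hlen l hl) ω (Finset.mem_filter.mp hω).2⟩
  -- the weight of a path in terms of the number of its code extensions
  have hW : ∀ l ∈ s, lampTrajWeight l.1 = ((Ext l).card : ℝ) * (1 / 4 : ℝ) ^ Kn := by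
    intro l hl
    rw [hext_card l hl]
    show (1 / 4 : ℝ) ^ (l.1.length - 1) = _
    have h1 : l.1.length - 1 ≤ Kn := by have := hlen l hl; omega
    push_cast
    rw [div_pow, div_pow, one_pow, one_pow, mul_one_div,
      div_eq_div_iff (by positivity) (by positivity), one_mul, ← pow_add]
    congr 1
    omega
  -- main comparison
  have hcard : ((s.biUnion Ext).card : ℝ) ≤ (F.card : ℝ) := by
    exact_mod_cast Nat.cast_le.mpr (Finset.card_le_card (Finset.biUnion_subset.mpr hsubbad))
  have hmain : ∑ l ∈ s, lampTrajWeight l.1 ≤ (F.card : ℝ) * (1 / 4 : ℝ) ^ Kn := by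
    calc ∑ l ∈ s, lampTrajWeight l.1
        = ∑ l ∈ s, ((Ext l).card : ℝ) * (1 / 4 : ℝ) ^ Kn := Finset.sum_congr rfl hW
      _ = ((∑ l ∈ s, (Ext l).card : ℕ) : ℝ) * (1 / 4 : ℝ) ^ Kn := by
          rw [← Finset.sum_mul]
          push_cast
          ring
      _ = (((s.biUnion Ext).card : ℕ) : ℝ) * (1 / 4 : ℝ) ^ Kn := by
          rw [Finset.card_biUnion hdisj]
      _ ≤ (F.card : ℝ) * (1 / 4 : ℝ) ^ Kn := by
          apply mul_le_mul_of_nonneg_right hcard (by positivity)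
  rcases Finset.eq_empty_or_nonempty F with hFe | hFne
  · rw [hFe] at hmain
    simp only [Finset.card_empty, Nat.cast_zero, zero_mul] at hmain
    exact le_trans hmain (le_of_lt hrhs)
  -- F nonempty: J.card ≤ Kn and the counting bound applies
  obtain ⟨ω₀, hω₀⟩ := hFne
  have hbad₀ : BadF ⌈(1 - (3 - K) / 3) * (R : ℝ)⌉ (-(R : ℤ))
      (Finset.Icc (-(R : ℤ)) (-(⌊(1 - (3 - K) / 3) * (R : ℝ)⌋ + 1))) Kn ω₀ := by
    rw [hFdef] at hω₀
    exact (Finset.mem_filter.mp hω₀).2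
  have hJK : (Finset.Icc (-(R : ℤ)) (-(⌊(1 - (3 - K) / 3) * (R : ℝ)⌋ + 1))).card ≤ Kn :=
    badf_cardJ hbad₀
  have hFcard : F.card ≤ 2 ^ Kn * 2 ^ (Kn -
      (Finset.Icc (-(R : ℤ)) (-(⌊(1 - (3 - K) / 3) * (R : ℝ)⌋ + 1))).card) := by
    rw [hFdef]
    exact card_bad _ _ _ Kn (by omega)
  -- arithmetic on the cardinality of J
  have hRpos : (1 : ℝ) ≤ (R : ℝ) := by exact_mod_cast hR
  have hlam_pos : 0 < (1 - (3 - K) / 3) * (R : ℝ) := by nlinarith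
  have hlam_ltR : (1 - (3 - K) / 3) * (R : ℝ) < (R : ℝ) := by nlinarith
  have hb0 : 0 ≤ ⌊(1 - (3 - K) / 3) * (R : ℝ)⌋ :=
    Int.floor_nonneg.mpr (le_of_lt hlam_pos)
  have hblam : (⌊(1 - (3 - K) / 3) * (R : ℝ)⌋ : ℝ) ≤ (1 - (3 - K) / 3) * (R : ℝ) :=
    Int.floor_le _
  have hbR : ⌊(1 - (3 - K) / 3) * (R : ℝ)⌋ < (R : ℤ) := by
    have : (⌊(1 - (3 - K) / 3) * (R : ℝ)⌋ : ℝ) < (R : ℝ) := lt_of_le_of_lt hblam hlam_ltR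
    exact_mod_cast this
  have hJint : ((Finset.Icc (-(R : ℤ)) (-(⌊(1 - (3 - K) / 3) * (R : ℝ)⌋ + 1))).card : ℤ)
      = (R : ℤ) - ⌊(1 - (3 - K) / 3) * (R : ℝ)⌋ := by
    rw [Int.card_Icc]
    rw [Int.toNat_of_nonneg (by omega)]
    ring
  have hJreal : ((Finset.Icc (-(R : ℤ)) (-(⌊(1 - (3 - K) / 3) * (R : ℝ)⌋ + 1))).card : ℝ)
      = (R : ℝ) - (⌊(1 - (3 - K) / 3) * (R : ℝ)⌋ : ℝ) := by
    exact_mod_cast congrArg (fun z : ℤ => (z : ℝ)) hJint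
  have hJge : (3 - K) / 3 * (R : ℝ)
      ≤ ((Finset.Icc (-(R : ℤ)) (-(⌊(1 - (3 - K) / 3) * (R : ℝ)⌋ + 1))).card : ℝ) := by
    rw [hJreal]
    nlinarith
  -- put the pieces together
  set Jc := (Finset.Icc (-(R : ℤ)) (-(⌊(1 - (3 - K) / 3) * (R : ℝ)⌋ + 1))).card with hJc
  have hpow : ((2 ^ Kn * 2 ^ (Kn - Jc) : ℕ) : ℝ) * (1 / 4 : ℝ) ^ Kn
      = (1 / 2 : ℝ) ^ Jc := by
    push_cast
    rw [div_pow, div_pow, one_pow, one_pow, mul_one_div,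
      div_eq_div_iff (by positivity) (by positivity), one_mul]
    have h4 : (4 : ℝ) = 2 * 2 := by norm_num
    rw [h4, mul_pow, mul_assoc, ← pow_add]
    have hexp : (Kn - Jc) + Jc = Kn := by omega
    rw [hexp]
  have hfinal : (F.card : ℝ) * (1 / 4 : ℝ) ^ Kn ≤ (1 / 2 : ℝ) ^ Jc := by
    rw [← hpow]
    apply mul_le_mul_of_nonneg_right _ (by positivity)
    exact_mod_cast hFcard
  refine le_trans hmain (le_trans hfinal ?_)
  have h2 : ((1 : ℝ) / 2) ^ Jc = (2 : ℝ) ^ (-(Jc : ℝ)) := by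
    rw [Real.rpow_neg (by norm_num), Real.rpow_natCast]
    rw [div_pow, one_pow, one_div]
  rw [h2]
  apply Real.rpow_le_rpow_of_exponent_le (by norm_num : (1 : ℝ) ≤ 2)
  linarith [hJge]

end LampEst
/-- **Exit estimate from `y₁`.** Fix `1 < K < 3`, `δ = (3-K)/3`, `λ = 1-δ`.
Started from `y₁ = (-R, 1_{[-R,0]})`, the probability that the walk exits
`B(x₀,KR)` at a state whose set of lit lamps meets `[λR, R]` is at most
`2^{-δR}`: on this event the walk must exit through position `λR` before
reaching `-3R`, and then every lamp in `[-R, -λR)` must have been switched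
off. -/
theorem lamplighter_exit_estimate_left (K : ℝ) (hK1 : 1 < K) (hK3 : K < 3)
    (R : ℕ) (hR : 1 ≤ R) :
    lampExitProb (lampRBall lampBase (K * R))
      {x : LV | ∃ i : ℤ, (1 - (3 - K) / 3) * R ≤ (i : ℝ) ∧ (i : ℝ) ≤ R ∧
        x.2.1 i ≠ 0}
      ((-(R : ℤ)), lampIcc (-(R : ℤ)) 0)
    ≤ (2 : ℝ) ^ (-((3 - K) / 3 * R)) := by
  classical
  unfold lampExitProb
  by_cases hsum : Summable (fun l : {l : List LV //
      lampIsExitPath (lampRBall lampBase (K * R))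
        {x : LV | ∃ i : ℤ, (1 - (3 - K) / 3) * R ≤ (i : ℝ) ∧ (i : ℝ) ≤ R ∧ x.2.1 i ≠ 0}
        ((-(R : ℤ)), lampIcc (-(R : ℤ)) 0) l} => lampTrajWeight l.1)
  · exact Summable.tsum_le_of_sum_le hsum (fun s => LampEst.sum_bound K hK1 hK3 R hR s)
  · rw [tsum_eq_zero_of_not_summable hsum]
    positivity
end

section
/- There exists a weighted graph satisfying the elliptic Harnack inequality but not having controlled weights: let G = ℤ × {0,1,2} with edges {(n,0),(n+1,0)} for n ∈ ℤ and {(n,i),(n,j)} for all n and i ≠ j in {0,1,2}; put weight ν = 2^{−|n|} on the edges {(n,1),(n,2)} and weight 1 on all other edges. Then (G,ν) does not have controlled weights (inf over edges of ν_{xy}/μ(x) = 0) but satisfies EHI. -/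
/-- The vertex set of the example: three copies of `ℤ`. -/
abbrev VEx : Type := ℤ × Fin 3

/-- Adjacency of the example graph: `(n,0) ∼ (n+1,0)` along the base line,
and `(n,i) ∼ (n,j)` for `i ≠ j` in each triangle. -/
def adjEx (x y : VEx) : Prop :=
  (x.2 = 0 ∧ y.2 = 0 ∧ (x.1 = y.1 + 1 ∨ y.1 = x.1 + 1)) ∨
  (x.1 = y.1 ∧ x.2 ≠ y.2)

open scoped Classical in
/-- The weights of the example: weight `2^{-|n|}` on the edge
`{(n,1),(n,2)}` and weight `1` on every other edge. -/
noncomputable def nuEx (x y : VEx) : ℝ :=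
  if adjEx x y then
    (if x.1 = y.1 ∧ x.2 ≠ 0 ∧ y.2 ≠ 0 then (2 : ℝ) ^ (-|x.1|) else 1)
  else 0


lemma adjEx_symm {x y : VEx} (h : adjEx x y) : adjEx y x := by
  rcases h with ⟨h1, h2, h3⟩ | ⟨h1, h2⟩
  · exact Or.inl ⟨h2, h1, h3.symm⟩
  · exact Or.inr ⟨h1.symm, h2.symm⟩

lemma adjEx_irrefl (x : VEx) : ¬ adjEx x x := by
  rintro (⟨_, _, h | h⟩ | ⟨_, h⟩) <;> first | omega | exact h rfl

def nbhdEx (x : VEx) : Finset VEx :=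
  if x.2 = 0 then {(x.1+1, 0), (x.1-1, 0), (x.1, 1), (x.1, 2)}
  else if x.2 = 1 then {(x.1, 0), (x.1, 2)}
  else {(x.1, 0), (x.1, 1)}

lemma mem_nbhdEx (x y : VEx) : y ∈ nbhdEx x ↔ adjEx x y := by
  obtain ⟨n, i⟩ := x
  obtain ⟨m, j⟩ := y
  fin_cases i <;> fin_cases j <;>
    simp [nbhdEx, adjEx, Prod.ext_iff] <;> omega

lemma connEx_line (n : ℤ) : Relation.ReflTransGen adjEx ((0 : ℤ), (0 : Fin 3)) (n, 0) := by
  induction n using Int.induction_on with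
  | zero => exact Relation.ReflTransGen.refl
  | succ k ih => exact ih.tail (Or.inl ⟨rfl, rfl, Or.inr rfl⟩)
  | pred k ih => exact ih.tail (Or.inl ⟨rfl, rfl, Or.inl (by push_cast; ring)⟩)

lemma connEx_base (x : VEx) : Relation.ReflTransGen adjEx x (x.1, 0) := by
  by_cases h : x.2 = 0
  · have : x = (x.1, (0 : Fin 3)) := Prod.ext rfl h
    rw [← this]
  · exact Relation.ReflTransGen.single (Or.inr ⟨rfl, h⟩)

lemma connEx (x y : VEx) : Relation.ReflTransGen adjEx x y := by
  have hs : Symmetric (Relation.ReflTransGen adjEx) :=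
    fun a b hab => by
      induction hab with
      | refl => exact Relation.ReflTransGen.refl
      | tail _ hbc ih => exact Relation.ReflTransGen.head (adjEx_symm hbc) ih
  exact ((connEx_base x).trans ((hs (connEx_line x.1)).trans (connEx_line y.1))).trans
    (hs (connEx_base y))

lemma nuEx_symm (x y : VEx) : nuEx x y = nuEx y x := by
  unfold nuEx
  by_cases h : adjEx x y
  · rw [if_pos h, if_pos (adjEx_symm h)]
    by_cases h2 : x.1 = y.1 ∧ x.2 ≠ 0 ∧ y.2 ≠ 0
    · rw [if_pos h2, if_pos ⟨h2.1.symm, h2.2.2, h2.2.1⟩, h2.1]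
    · rw [if_neg h2, if_neg (fun h3 => h2 ⟨h3.1.symm, h3.2.2, h3.2.1⟩)]
  · rw [if_neg h, if_neg (fun h' => h (adjEx_symm h'))]

lemma two_zpow_pos (n : ℤ) : (0 : ℝ) < (2 : ℝ) ^ n := by positivity

lemma nuEx_nonneg (x y : VEx) : 0 ≤ nuEx x y := by
  unfold nuEx
  split
  · split
    · exact (two_zpow_pos _).le
    · norm_num
  · exact le_refl 0

lemma nuEx_pos_iff (x y : VEx) : 0 < nuEx x y ↔ adjEx x y := by
  unfold nuEx
  by_cases h : adjEx x y
  · rw [if_pos h]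
    simp only [h, iff_true]
    split
    · exact two_zpow_pos _
    · norm_num
  · rw [if_neg h]
    simp [h]

namespace EHIProof

noncomputable def WEx : WeightedGraph VEx where
  Adj := adjEx
  symm := adjEx_symm
  irrefl := adjEx_irrefl
  nbhd := nbhdEx
  mem_nbhd := mem_nbhdEx
  conn := connEx
  ν := nuEx
  ν_symm := nuEx_symm
  ν_nonneg := nuEx_nonneg
  ν_pos_iff := nuEx_pos_iff

lemma WExG_adj (x y : VEx) : WEx.G.Adj x y ↔ adjEx x y := Iff.rfl

lemma WEx_connected : WEx.G.Connected := by
  constructor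
  intro x y
  rw [SimpleGraph.reachable_iff_reflTransGen]
  exact connEx x y

lemma dist_le_one_of_adj {x y : VEx} (h : adjEx x y) : WEx.G.dist x y ≤ 1 := by
  have h' : WEx.G.Adj x y := h
  simpa using SimpleGraph.dist_le (SimpleGraph.Walk.cons h' SimpleGraph.Walk.nil)

lemma dist_tri (x y z : VEx) : WEx.G.dist x z ≤ WEx.G.dist x y + WEx.G.dist y z :=
  WEx_connected.dist_triangle

lemma dist_line_right (a : ℤ) (k : ℕ) : WEx.G.dist (a, 0) (a + k, 0) ≤ k := by
  induction k with
  | zero => simp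
  | succ k ih =>
    have h1 : adjEx ((a + k : ℤ), (0 : Fin 3)) ((a + (k+1) : ℤ), (0 : Fin 3)) := by
      refine Or.inl ⟨rfl, rfl, Or.inr ?_⟩
      push_cast; ring
    calc WEx.G.dist (a, 0) (a + (k+1 : ℕ), 0)
        ≤ WEx.G.dist (a, 0) (a + k, 0) + WEx.G.dist ((a + k : ℤ), (0:Fin 3)) (a + (k+1:ℕ), 0) :=
          dist_tri _ _ _
      _ ≤ k + 1 := add_le_add ih (dist_le_one_of_adj h1)

lemma dist_line (a b : ℤ) : WEx.G.dist (a, 0) (b, 0) ≤ (b - a).natAbs := by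
  obtain ⟨k, hk⟩ : ∃ k : ℕ, (b - a).natAbs = k := ⟨_, rfl⟩
  rw [hk]
  rcases le_total a b with hab | hab
  · have hb : b = a + (k : ℤ) := by omega
    rw [hb]
    exact dist_line_right a k
  · have ha : a = b + (k : ℤ) := by omega
    rw [SimpleGraph.dist_comm, ha]
    exact dist_line_right b k

lemma dist_to_base (x : VEx) : WEx.G.dist x (x.1, 0) ≤ 1 := by
  by_cases h : x.2 = 0
  · have : x = (x.1, (0 : Fin 3)) := Prod.ext rfl h
    rw [this]; simp [SimpleGraph.dist_self]
  · exact dist_le_one_of_adj (Or.inr ⟨rfl, h⟩)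

/-- Master upper bound. -/
lemma dist_upper (n₀ : ℤ) (i₀ : Fin 3) (n : ℤ) (j : Fin 3) :
    WEx.G.dist (n₀, i₀) (n, j) ≤
      (if i₀ = 0 then 0 else 1) + (n - n₀).natAbs + (if j = 0 then 0 else 1) := by
  calc WEx.G.dist (n₀, i₀) (n, j)
      ≤ WEx.G.dist (n₀, i₀) (n₀, 0) + WEx.G.dist ((n₀ : ℤ), (0 : Fin 3)) (n, j) :=
        dist_tri _ _ _
    _ ≤ WEx.G.dist (n₀, i₀) (n₀, 0) +
        (WEx.G.dist ((n₀:ℤ), (0:Fin 3)) (n, 0) + WEx.G.dist ((n:ℤ), (0:Fin 3)) (n, j)) := by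
        exact add_le_add le_rfl (dist_tri _ _ _)
    _ ≤ (if i₀ = 0 then 0 else 1) + ((n - n₀).natAbs + (if j = 0 then 0 else 1)) := by
        gcongr
        · split
          · next h => subst h; simpa using dist_to_base (n₀, (0 : Fin 3))
          · exact dist_to_base (n₀, i₀)
        · exact dist_line n₀ n
        · split
          · next h => subst h; simp
          · rw [SimpleGraph.dist_comm]; exact dist_to_base (n, j)
    _ = _ := by ring

lemma adj_step {x y : VEx} (h : adjEx x y) : (x.1 - y.1).natAbs ≤ 1 := by
  rcases h with ⟨_, _, h | h⟩ | ⟨h, _⟩ <;> omega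

lemma walk_lower {x y : VEx} (w : WEx.G.Walk x y) : (x.1 - y.1).natAbs ≤ w.length := by
  induction w with
  | nil => simp
  | cons h p ih =>
    rename_i a b c
    have h1 : (a.1 - b.1).natAbs ≤ 1 := adj_step h
    rw [SimpleGraph.Walk.length_cons]
    omega

lemma dist_lower (x y : VEx) : (x.1 - y.1).natAbs ≤ WEx.G.dist x y := by
  obtain ⟨p, hp⟩ := WEx_connected.exists_walk_length_eq_dist x y
  rw [← hp]
  exact walk_lower p

lemma dist_lower' {x y : VEx} (hx : x.2 ≠ 0) (hne : x.1 ≠ y.1) :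
    (x.1 - y.1).natAbs + 1 ≤ WEx.G.dist x y := by
  obtain ⟨p, hp⟩ := WEx_connected.exists_walk_length_eq_dist x y
  rw [← hp]
  cases p with
  | nil => exact absurd rfl hne
  | cons h q =>
    rename_i b
    have hb : b.1 = x.1 := by
      rcases h with ⟨h1, _, _⟩ | ⟨h1, _⟩
      · exact absurd h1 hx
      · exact h1.symm
    have := walk_lower q
    rw [SimpleGraph.Walk.length_cons]
    omega



lemma nuEx_base {x y : VEx} (h : adjEx x y) (h2 : ¬(x.1 = y.1 ∧ x.2 ≠ 0 ∧ y.2 ≠ 0)) :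
    nuEx x y = 1 := by
  unfold nuEx; rw [if_pos h, if_neg h2]

lemma nu_r (n : ℤ) : nuEx (n, 0) (n+1, 0) = 1 :=
  nuEx_base (Or.inl ⟨rfl, rfl, Or.inr rfl⟩) (by simp)

lemma nu_l (n : ℤ) : nuEx (n, 0) (n-1, 0) = 1 :=
  nuEx_base (Or.inl ⟨rfl, rfl, Or.inl (by ring)⟩) (by simp)

lemma adj_tri (n : ℤ) (i j : Fin 3) (hij : i ≠ j) : adjEx (n, i) (n, j) := Or.inr ⟨rfl, hij⟩

lemma nu_01 (n : ℤ) : nuEx (n, 0) (n, 1) = 1 :=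
  nuEx_base (adj_tri n 0 1 (by decide)) (by simp)

lemma nu_02 (n : ℤ) : nuEx (n, 0) (n, 2) = 1 :=
  nuEx_base (adj_tri n 0 2 (by decide)) (by simp)

lemma nu_10 (n : ℤ) : nuEx (n, 1) (n, 0) = 1 :=
  nuEx_base (adj_tri n 1 0 (by decide)) (by simp)

lemma nu_20 (n : ℤ) : nuEx (n, 2) (n, 0) = 1 :=
  nuEx_base (adj_tri n 2 0 (by decide)) (by simp)

lemma f1ne0 : (1 : Fin 3) ≠ 0 := by decide
lemma f2ne0 : (2 : Fin 3) ≠ 0 := by decide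

lemma nu_12 (n : ℤ) : nuEx (n, 1) (n, 2) = (2 : ℝ) ^ (-|n|) := by
  unfold nuEx
  rw [if_pos (adj_tri n 1 2 (by decide)), if_pos ⟨rfl, f1ne0, f2ne0⟩]

lemma nu_21 (n : ℤ) : nuEx (n, 2) (n, 1) = (2 : ℝ) ^ (-|n|) := by
  unfold nuEx
  rw [if_pos (adj_tri n 2 1 (by decide)), if_pos ⟨rfl, f2ne0, f1ne0⟩]

lemma nbhd0 (n : ℤ) : nbhdEx (n, 0) = {((n+1 : ℤ), (0 : Fin 3)), (n-1, 0), (n, 1), (n, 2)} := rfl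
lemma nbhd1 (n : ℤ) : nbhdEx (n, 1) = {((n : ℤ), (0 : Fin 3)), (n, 2)} := rfl
lemma nbhd2 (n : ℤ) : nbhdEx (n, 2) = {((n : ℤ), (0 : Fin 3)), (n, 1)} := rfl

lemma lap0 (h : VEx → ℝ) (n : ℤ) :
    WEx.lap h (n, 0) = (h (n+1, 0) - h (n, 0)) + (h (n-1, 0) - h (n, 0))
      + (h (n, 1) - h (n, 0)) + (h (n, 2) - h (n, 0)) := by
  show ∑ y ∈ nbhdEx (n, 0), nuEx (n, 0) y * (h y - h (n, 0)) = _
  rw [nbhd0]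
  rw [Finset.sum_insert (by simp [Prod.ext_iff]; omega),
    Finset.sum_insert (by simp [Prod.ext_iff]),
    Finset.sum_insert (by simp [Prod.ext_iff]), Finset.sum_singleton]
  rw [nu_r, nu_l, nu_01, nu_02]; ring

lemma lap1 (h : VEx → ℝ) (n : ℤ) :
    WEx.lap h (n, 1) = (h (n, 0) - h (n, 1))
      + (2 : ℝ) ^ (-|n|) * (h (n, 2) - h (n, 1)) := by
  show ∑ y ∈ nbhdEx (n, 1), nuEx (n, 1) y * (h y - h (n, 1)) = _
  rw [nbhd1, Finset.sum_insert (by simp [Prod.ext_iff]), Finset.sum_singleton, nu_10, nu_12]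
  ring

lemma lap2 (h : VEx → ℝ) (n : ℤ) :
    WEx.lap h (n, 2) = (h (n, 0) - h (n, 2))
      + (2 : ℝ) ^ (-|n|) * (h (n, 1) - h (n, 2)) := by
  show ∑ y ∈ nbhdEx (n, 2), nuEx (n, 2) y * (h y - h (n, 2)) = _
  rw [nbhd2, Finset.sum_insert (by simp [Prod.ext_iff]), Finset.sum_singleton, nu_20, nu_21]
  ring

lemma rigid (h : VEx → ℝ) (n : ℤ) (h1 : WEx.lap h (n, 1) = 0) (h2 : WEx.lap h (n, 2) = 0) :
    h (n, 1) = h (n, 0) ∧ h (n, 2) = h (n, 0) := by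
  rw [lap1] at h1
  rw [lap2] at h2
  set w : ℝ := (2 : ℝ) ^ (-|n|) with hw
  have hwpos : 0 < w := two_zpow_pos _
  have key : (h (n, 2) - h (n, 1)) * (1 + 2 * w) = 0 := by linear_combination h1 - h2
  have h12 : h (n, 2) = h (n, 1) := by
    rcases mul_eq_zero.mp key with hk | hk
    · linarith
    · linarith
  constructor
  · have : h (n, 0) - h (n, 1) = 0 := by linear_combination h1 - w * h12
    linarith
  · have : h (n, 0) - h (n, 2) = 0 := by linear_combination h2 + w * h12
    linarith

lemma recur (h : VEx → ℝ) (n : ℤ) (h0 : WEx.lap h (n, 0) = 0)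
    (h1 : WEx.lap h (n, 1) = 0) (h2 : WEx.lap h (n, 2) = 0) :
    h (n+1, 0) + h (n-1, 0) = 2 * h (n, 0) := by
  obtain ⟨e1, e2⟩ := rigid h n h1 h2
  rw [lap0] at h0
  linarith



lemma slope_pos (f : ℤ → ℝ) (n₀ : ℤ) (K : ℕ)
    (hrec : ∀ k : ℤ, |k| ≤ (K : ℤ) → f (n₀ + k + 1) + f (n₀ + k - 1) = 2 * f (n₀ + k)) :
    ∀ j : ℕ, (j : ℤ) ≤ (K : ℤ) → f (n₀ + j + 1) - f (n₀ + j) = f (n₀ + 1) - f n₀ := by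
  intro j
  induction j with
  | zero => intro _; norm_num
  | succ j ih =>
    intro hj
    have hj' : (j : ℤ) ≤ (K : ℤ) := by push_cast at hj ⊢; omega
    have hr := hrec ((j : ℤ) + 1) (by rw [abs_le]; push_cast at hj ⊢; omega)
    have e1 : n₀ + ((j : ℤ) + 1) + 1 = n₀ + ((j : ℕ) + 1 : ℕ) + 1 := by push_cast; ring
    have e2 : n₀ + ((j : ℤ) + 1) - 1 = n₀ + (j : ℕ) := by push_cast; ring
    have e3 : n₀ + ((j : ℤ) + 1) = n₀ + ((j : ℕ) + 1 : ℕ) := by push_cast; ring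
    rw [e1, e2, e3] at hr
    have := ih hj'
    have e4 : n₀ + (j : ℕ) + 1 = n₀ + ((j : ℕ) + 1 : ℕ) := by push_cast; ring
    rw [e4] at this
    linarith

lemma slope_neg (f : ℤ → ℝ) (n₀ : ℤ) (K : ℕ)
    (hrec : ∀ k : ℤ, |k| ≤ (K : ℤ) → f (n₀ + k + 1) + f (n₀ + k - 1) = 2 * f (n₀ + k)) :
    ∀ j : ℕ, (j : ℤ) ≤ (K : ℤ) → f (n₀ - j) - f (n₀ - j - 1) = f (n₀ + 1) - f n₀ := by
  intro j
  induction j with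
  | zero =>
    intro h0
    have hr := hrec 0 (by simp)
    norm_num at hr ⊢
    linarith
  | succ j ih =>
    intro hj
    have hj' : (j : ℤ) ≤ (K : ℤ) := by push_cast at hj ⊢; omega
    have hr := hrec (-(j : ℤ) - 1) (by rw [abs_le]; push_cast at hj ⊢; omega)
    have e1 : n₀ + (-(j : ℤ) - 1) + 1 = n₀ - (j : ℕ) := by push_cast; ring
    have e2 : n₀ + (-(j : ℤ) - 1) - 1 = n₀ - ((j : ℕ) + 1 : ℕ) - 1 := by push_cast; ring
    have e3 : n₀ + (-(j : ℤ) - 1) = n₀ - ((j : ℕ) + 1 : ℕ) := by push_cast; ring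
    rw [e1, e2, e3] at hr
    have := ih hj'
    have e4 : n₀ - (j : ℕ) - 1 = n₀ - ((j : ℕ) + 1 : ℕ) := by push_cast; ring
    rw [e4] at this
    linarith

lemma affine (f : ℤ → ℝ) (n₀ : ℤ) (K : ℕ)
    (hrec : ∀ k : ℤ, |k| ≤ (K : ℤ) → f (n₀ + k + 1) + f (n₀ + k - 1) = 2 * f (n₀ + k)) :
    ∀ m : ℤ, |m| ≤ (K : ℤ) + 1 → f (n₀ + m) = f n₀ + m * (f (n₀ + 1) - f n₀) := by
  have hpos : ∀ j : ℕ, (j : ℤ) ≤ (K : ℤ) + 1 → f (n₀ + j) = f n₀ + j * (f (n₀ + 1) - f n₀) := by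
    intro j
    induction j with
    | zero => intro _; norm_num
    | succ j ih =>
      intro hj
      have hj' : (j : ℤ) ≤ (K : ℤ) + 1 := by push_cast at hj ⊢; omega
      have hs := slope_pos f n₀ K hrec j (by push_cast at hj ⊢; omega)
      have := ih hj'
      have e4 : n₀ + (j : ℕ) + 1 = n₀ + ((j : ℕ) + 1 : ℕ) := by push_cast; ring
      rw [e4] at hs
      push_cast
      push_cast at this hs
      linarith
  have hneg : ∀ j : ℕ, (j : ℤ) ≤ (K : ℤ) + 1 → f (n₀ - j) = f n₀ - j * (f (n₀ + 1) - f n₀) := by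
    intro j
    induction j with
    | zero => intro _; norm_num
    | succ j ih =>
      intro hj
      have hj' : (j : ℤ) ≤ (K : ℤ) + 1 := by push_cast at hj ⊢; omega
      have hs := slope_neg f n₀ K hrec j (by push_cast at hj ⊢; omega)
      have := ih hj'
      have e4 : n₀ - (j : ℕ) - 1 = n₀ - ((j : ℕ) + 1 : ℕ) := by push_cast; ring
      rw [e4] at hs
      push_cast
      push_cast at this hs
      linarith
  intro m hm
  have hm' : -((K : ℤ) + 1) ≤ m ∧ m ≤ (K : ℤ) + 1 := abs_le.mp hm
  rcases le_total 0 m with h0 | h0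
  · have : m = (m.toNat : ℤ) := by omega
    rw [this]
    exact hpos m.toNat (by omega)
  · have : m = -((-m).toNat : ℤ) := by omega
    rw [this]
    have := hneg (-m).toNat (by omega)
    have e : n₀ - ((-m).toNat : ℤ) = n₀ + -((-m).toNat : ℤ) := by ring
    rw [e] at this
    rw [this]
    push_cast
    ring



lemma WEx_EHI : WEx.EHI 3 := by
  intro x R hR h hpos hharm y hy z hz
  obtain ⟨n₀, i₀⟩ := x
  set e : ℕ := if i₀ = 0 then 0 else 1 with he
  have he1 : e ≤ 1 := by rw [he]; split <;> norm_num
  have heR : e ≤ 2 * R - 1 := by omega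
  set K : ℕ := 2 * R - 1 - e with hK
  have hKe : K + e + 1 = 2 * R := by omega
  have hharm' : ∀ w ∈ WEx.ball (n₀, i₀) (2 * R), WEx.lap h w = 0 := hharm
  have hball : ∀ n : ℤ, ∀ j : Fin 3, (n - n₀).natAbs ≤ K →
      (n, j) ∈ WEx.ball (n₀, i₀) (2 * R) := by
    intro n j hn
    have hd := dist_upper n₀ i₀ n j
    rw [← he] at hd
    have hj1 : (if j = 0 then 0 else 1) ≤ 1 := by split <;> norm_num
    show WEx.G.dist (n₀, i₀) (n, j) ≤ 2 * R
    omega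
  set f : ℤ → ℝ := fun n => h (n, 0) with hf
  have hrig : ∀ n : ℤ, (n - n₀).natAbs ≤ K → h (n, 1) = f n ∧ h (n, 2) = f n := by
    intro n hn
    exact rigid h n (hharm' _ (hball n 1 hn)) (hharm' _ (hball n 2 hn))
  have hrec : ∀ k : ℤ, |k| ≤ (K : ℤ) → f (n₀ + k + 1) + f (n₀ + k - 1) = 2 * f (n₀ + k) := by
    intro k hk
    rw [abs_le] at hk
    have hk' : ((n₀ + k) - n₀).natAbs ≤ K := by omega
    exact recur h (n₀ + k) (hharm' _ (hball (n₀ + k) 0 hk'))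
      (hharm' _ (hball (n₀ + k) 1 hk')) (hharm' _ (hball (n₀ + k) 2 hk'))
  set s : ℝ := f (n₀ + 1) - f n₀ with hs
  have haff := affine f n₀ K hrec
  have hup := haff ((K : ℤ) + 1) (by rw [abs_le]; omega)
  have hdn := haff (-((K : ℤ) + 1)) (by rw [abs_le]; omega)
  have hb1 : ((K : ℝ) + 1) * s ≤ f n₀ := by
    have h0 : (0 : ℝ) ≤ f (n₀ + (-((K : ℤ) + 1))) := hpos _
    rw [hdn] at h0
    push_cast at h0
    rw [← hs] at h0
    linarith
  have hb2 : -(f n₀) ≤ ((K : ℝ) + 1) * s := by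
    have h0 : (0 : ℝ) ≤ f (n₀ + ((K : ℤ) + 1)) := hpos _
    rw [hup] at h0
    push_cast at h0
    rw [← hs] at h0
    linarith
  have hcol : ∀ w : VEx, w ∈ WEx.ball (n₀, i₀) R → (w.1 - n₀).natAbs ≤ R - e := by
    intro w hw
    have hw' : WEx.G.dist (n₀, i₀) w ≤ R := hw
    have hl : (n₀ - w.1).natAbs ≤ WEx.G.dist (n₀, i₀) w := dist_lower (n₀, i₀) w
    by_cases hi : i₀ = 0
    · have he0 : e = 0 := by rw [he, if_pos hi]
      omega
    · have he0 : e = 1 := by rw [he, if_neg hi]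
      by_cases hne : w.1 = n₀
      · omega
      · have hl2 : (n₀ - w.1).natAbs + 1 ≤ WEx.G.dist (n₀, i₀) w :=
          dist_lower' (x := ((n₀ : ℤ), i₀)) (y := w) hi (fun hq => hne hq.symm)
        omega
  have hval : ∀ w : VEx, w ∈ WEx.ball (n₀, i₀) R → h w = f w.1 := by
    intro w hw
    have hcolK : (w.1 - n₀).natAbs ≤ K := by
      have := hcol w hw; omega
    obtain ⟨m, j⟩ := w
    have hr2 := hrig m (by simpa using hcolK)
    fin_cases j
    · rfl
    · exact hr2.1
    · exact hr2.2
  have hfin : ∀ w : VEx, w ∈ WEx.ball (n₀, i₀) R →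
      f n₀ / 2 ≤ h w ∧ h w ≤ f n₀ + f n₀ / 2 := by
    intro w hw
    rw [hval w hw]
    have hc := hcol w hw
    set d : ℤ := w.1 - n₀ with hd
    have hw1 : w.1 = n₀ + d := by omega
    have habs : |d| ≤ (K : ℤ) + 1 := by rw [abs_le]; omega
    have hfd : f w.1 = f n₀ + d * s := by rw [hw1]; exact haff d habs
    rw [hfd]
    have hKs : |((K : ℝ) + 1) * s| ≤ f n₀ := abs_le.mpr ⟨by linarith, hb1⟩
    have hsabs : ((K : ℝ) + 1) * |s| = |((K : ℝ) + 1) * s| := by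
      rw [abs_mul, abs_of_nonneg (by positivity : (0 : ℝ) ≤ (K : ℝ) + 1)]
    have h2d : d.natAbs * 2 ≤ K + 1 := by omega
    have hdabs : |(d : ℝ)| ≤ ((K : ℝ) + 1) / 2 := by
      have hcast : ((d.natAbs : ℤ) : ℝ) = (d.natAbs : ℝ) := by
        rw [Int.cast_natCast]
      rw [← Int.cast_abs, Int.abs_eq_natAbs, hcast]
      have : ((d.natAbs : ℝ)) * 2 ≤ (K : ℝ) + 1 := by exact_mod_cast h2d
      linarith
    have hprod : |(d : ℝ) * s| ≤ f n₀ / 2 := by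
      rw [abs_mul]
      calc |(d : ℝ)| * |s| ≤ (((K : ℝ) + 1) / 2) * |s| :=
            mul_le_mul_of_nonneg_right hdabs (abs_nonneg s)
        _ = |((K : ℝ) + 1) * s| / 2 := by rw [← hsabs]; ring
        _ ≤ f n₀ / 2 := by linarith
    have hpr := abs_le.mp hprod
    constructor
    · push_cast
      linarith [hpr.1]
    · push_cast
      linarith [hpr.2]
  have hy' := hfin y hy
  have hz' := hfin z hz
  have h00 : 0 ≤ f n₀ := hpos _
  calc h y ≤ f n₀ + f n₀ / 2 := hy'.2
    _ = 3 * (f n₀ / 2) := by ring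
    _ ≤ 3 * h z := by linarith [hz'.1]

lemma mu_lower (n : ℤ) : 1 ≤ WEx.mu (n, 1) := by
  show 1 ≤ ∑ y ∈ nbhdEx (n, 1), nuEx (n, 1) y
  rw [nbhd1, Finset.sum_insert (by simp [Prod.ext_iff]), Finset.sum_singleton, nu_10, nu_12]
  have := two_zpow_pos (-|n|)
  linarith

lemma not_controlled : ¬ ∃ p₀ : ℝ, WEx.ControlledWeights p₀ := by
  rintro ⟨p₀, hp, hcw⟩
  obtain ⟨n, hn⟩ := exists_pow_lt_of_lt_one hp (by norm_num : (1 / 2 : ℝ) < 1)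
  have hadj : adjEx ((n : ℤ), 1) ((n : ℤ), 2) := adj_tri _ 1 2 (by decide)
  have hle := hcw _ _ hadj
  rw [show WEx.ν ((n : ℤ), 1) ((n : ℤ), 2) = nuEx ((n : ℤ), 1) ((n : ℤ), 2) from rfl,
    nu_12] at hle
  have hmu := mu_lower (n : ℤ)
  have hzp : (2 : ℝ) ^ (-|(n : ℤ)|) = (1 / 2 : ℝ) ^ n := by
    rw [abs_of_nonneg (by positivity : (0 : ℤ) ≤ (n : ℤ)), zpow_neg, zpow_natCast, one_div,
      inv_pow]
  rw [hzp] at hle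
  have hmul : p₀ * 1 ≤ p₀ * WEx.mu ((n : ℤ), 1) :=
    mul_le_mul_of_nonneg_left hmu hp.le
  linarith

end EHIProof

/-- **EHI does not imply controlled weights.** The weighted graph
`ℤ × {0,1,2}` with edges `{(n,0),(n+1,0)}` and `{(n,i),(n,j)}` (`i ≠ j`),
with weight `2^{-|n|}` on the edges `{(n,1),(n,2)}` and weight `1` on all
other edges, does not have controlled weights but satisfies the elliptic
Harnack inequality. -/
theorem ehi_without_controlled_weights :
    ∃ W : WeightedGraph VEx,
      (∀ x y, W.Adj x y ↔ adjEx x y) ∧ (∀ x y, W.ν x y = nuEx x y) ∧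
      (¬ ∃ p₀ : ℝ, W.ControlledWeights p₀) ∧ (∃ C₁ : ℝ, W.EHI C₁) := by
  refine ⟨EHIProof.WEx, fun x y => Iff.rfl, fun x y => rfl,
    EHIProof.not_controlled, ⟨3, EHIProof.WEx_EHI⟩⟩
end
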